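/- arXiv:2212.07403 — 6 statements merged into one kernel-verified Lean document; each statement's English description precedes it below -/
import Mathlib

section
/- q-derivative identity for the kernel (identity (2.8) of the paper): for every t ∈ (0,T] and λ > 0, D_q[Γ_{υ,λ}](t) = λ υ(t) Γ_{υ,λ}(qt), where D_q f(t) = (f(t)−f(qt))/((1−q)t). -/
open scoped BigOperators InnerProductSpace

noncomputable def qDeriv (q : ℝ) (f : ℝ → ℝ) (t : ℝ) : ℝ :=
  (f t - f (q * t)) / ((1 - q) * t)

noncomputable def qDerivC (q : ℝ) (f : ℝ → ℂ) (t : ℝ) : ℂ :=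
  (f t - f (q * t)) / (((1 - q) * t : ℝ) : ℂ)

noncomputable def jacksonIntegral (q x : ℝ) (f : ℝ → ℝ) : ℝ :=
  (1 - q) * x * ∑' m : ℕ, q ^ m * f (q ^ m * x)

noncomputable def jacksonIntegralC (q x : ℝ) (f : ℝ → ℂ) : ℂ :=
  (((1 - q) * x : ℝ) : ℂ) * ∑' m : ℕ, (q : ℂ) ^ m * f (q ^ m * x)

noncomputable def qGamma (q lam : ℝ) (v : ℝ → ℝ) (t : ℝ) : ℝ :=
  ∏' i : ℕ, (1 + (1 - q) * lam * q ^ i * t * v (q ^ i * t))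

noncomputable def qFact (q : ℝ) (k : ℕ) : ℝ :=
  ∏ j ∈ Finset.range k, ((1 - q ^ (j + 1)) / (1 - q))

noncomputable def qExp (q x : ℝ) : ℝ :=
  ∑' k : ℕ, q ^ (k * (k - 1) / 2) * x ^ k / qFact q k

noncomputable def qDerivH (q : ℝ) {H : Type*} [NormedAddCommGroup H] [NormedSpace ℂ H]
    (u : ℝ → H) (t : ℝ) : H :=
  (((1 - q) * t)⁻¹ : ℝ) • (u t - u (q * t))

noncomputable def sobNormSq {H : Type*} [NormedAddCommGroup H] [InnerProductSpace ℂ H]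
    {I : Type*} (e : HilbertBasis I ℂ H) (lam : I → ℝ) (d : ℝ) (u : H) : ℝ :=
  ∑' k, lam k ^ d * ‖⟪e k, u⟫_ℂ‖ ^ 2

def sobMem {H : Type*} [NormedAddCommGroup H] [InnerProductSpace ℂ H]
    {I : Type*} (e : HilbertBasis I ℂ H) (lam : I → ℝ) (d : ℝ) (u : H) : Prop :=
  Summable (fun k => lam k ^ d * ‖⟪e k, u⟫_ℂ‖ ^ 2)

lemma aux_mult (q T β lam : ℝ) (v : ℝ → ℝ) (hq0 : 0 < q) (hq1 : q < 1)
    (hlam : 0 < lam) (t : ℝ) (ht : t ∈ Set.Ioc (0:ℝ) T)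
    (hv : ∀ s ∈ Set.Icc (0 : ℝ) T, 0 ≤ v s ∧ v s ≤ β) :
    Multipliable (fun i : ℕ => (1 + (1 - q) * lam * q ^ i * t * v (q ^ i * t))) := by
  have hc : 0 < (1 - q) * lam := mul_pos (by linarith) hlam
  have hmem : ∀ i : ℕ, q ^ i * t ∈ Set.Icc (0:ℝ) T := by
    intro i
    constructor
    · exact mul_nonneg (pow_nonneg hq0.le i) ht.1.le
    · calc q ^ i * t ≤ 1 * t := by
            apply mul_le_mul_of_nonneg_right _ ht.1.le
            exact pow_le_one₀ hq0.le hq1.le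
        _ ≤ T := by simpa using ht.2
  have hnn : ∀ i : ℕ, 0 ≤ (1 - q) * lam * q ^ i * t * v (q ^ i * t) := by
    intro i
    exact mul_nonneg (mul_nonneg (mul_nonneg hc.le (pow_nonneg hq0.le i)) ht.1.le)
      (hv _ (hmem i)).1
  have hβ0 : 0 ≤ β := le_trans (hv _ (hmem 0)).1 (hv _ (hmem 0)).2
  have hsum : Summable (fun i : ℕ => (1 - q) * lam * q ^ i * t * v (q ^ i * t)) := by
    refine Summable.of_nonneg_of_le hnn (fun i => ?_)
      ((summable_geometric_of_lt_one hq0.le hq1).mul_left ((1 - q) * lam * t * β))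
    have h2 := (hv _ (hmem i)).2
    have hnn2 : 0 ≤ (1 - q) * lam * q ^ i * t :=
      mul_nonneg (mul_nonneg hc.le (pow_nonneg hq0.le i)) ht.1.le
    calc (1 - q) * lam * q ^ i * t * v (q ^ i * t)
        ≤ (1 - q) * lam * q ^ i * t * β := mul_le_mul_of_nonneg_left h2 hnn2
      _ = ((1 - q) * lam * t * β) * q ^ i := by ring
  have hlog : Summable (fun i : ℕ => Real.log (1 + (1 - q) * lam * q ^ i * t * v (q ^ i * t))) := by
    apply Summable.of_nonneg_of_le _ _ hsum
    · intro i
      apply Real.log_nonneg; linarith [hnn i]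
    · intro i
      have := Real.log_le_sub_one_of_pos (x := 1 + (1 - q) * lam * q ^ i * t * v (q ^ i * t))
        (by linarith [hnn i])
      linarith
  have := hlog.hasSum.rexp
  refine ⟨_, this.congr_fun fun i => ?_⟩
  simp only [Function.comp]
  rw [Real.exp_log (by linarith [hnn i])]


set_option maxHeartbeats 1000000 in
/-- q-derivative identity for the kernel (identity (2.8) of the paper): for every `t ∈ (0,T]`
and `λ > 0`, `D_q[Γ_{υ,λ}](t) = λ υ(t) Γ_{υ,λ}(qt)`, where
`D_q f(t) = (f(t)−f(qt))/((1−q)t)`. -/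
theorem kernel_qDeriv
    (q T α β lam : ℝ) (v : ℝ → ℝ)
    (hq0 : 0 < q) (hq1 : q < 1)
    (hvcont : ContinuousOn v (Set.Icc 0 T))
    (hα : 0 < α)
    (hv : ∀ t ∈ Set.Icc (0 : ℝ) T, α ≤ v t ∧ v t ≤ β)
    (hlam : 0 < lam) :
    ∀ t ∈ Set.Ioc (0 : ℝ) T,
      qDeriv q (qGamma q lam v) t = lam * v t * qGamma q lam v (q * t) := by
  intro t ht
  have hv' : ∀ s ∈ Set.Icc (0 : ℝ) T, 0 ≤ v s ∧ v s ≤ β :=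
    fun s hs => ⟨le_trans hα.le (hv s hs).1, (hv s hs).2⟩
  have hmul := aux_mult q T β lam v hq0 hq1 hlam t ht hv'
  have hmul' : Multipliable
      (fun i : ℕ => 1 + (1 - q) * lam * q ^ (i + 1) * t * v (q ^ (i + 1) * t)) := by
    have hqt : q * t ∈ Set.Ioc (0:ℝ) T :=
      ⟨mul_pos hq0 ht.1, le_trans (by nlinarith [ht.1] : q * t ≤ t) ht.2⟩
    have := aux_mult q T β lam v hq0 hq1 hlam (q * t) hqt hv'
    apply this.congr
    intro i
    have h1 : q ^ (i + 1) * t = q ^ i * (q * t) := by ring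
    rw [h1]
    ring
  have hshift : qGamma q lam v t
      = (1 + (1 - q) * lam * t * v t) * qGamma q lam v (q * t) := by
    unfold qGamma
    rw [tprod_eq_zero_mul' hmul']
    congr 1
    · simp
    · apply tprod_congr
      intro i
      have h1 : q ^ (i + 1) * t = q ^ i * (q * t) := by ring
      rw [h1]; ring
  have hne : (1 - q) * t ≠ 0 := by
    have : 0 < (1 - q) * t := mul_pos (by linarith) ht.1
    exact this.ne'
  unfold qDeriv
  rw [hshift]
  rw [div_eq_iff hne]
  ring
end

section
/- Lower bound for the Jackson integral of the kernel (inequality (2.9) of the paper): for λ > 0, ∫_0^T Γ_{υ,λ}(s) d_q s ≥ Γ_{υ,λ}(T)/(λβ) − 1/(λβ)·Γ_{υ,λ}(0), i.e. since Γ_{υ,λ}(0) = 1, ∫_0^T Γ_{υ,λ}(s) d_q s ≥ (Γ_{υ,λ}(T) − 1)/(λβ); in particular ∫_0^T Γ_{υ,λ}(s) d_q s ≥ Γ_{υ,λ}(T)/(λβ) − 1/(λβ). -/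
open scoped BigOperators InnerProductSpace
open Filter Topology

private lemma aux_one_le_prod {a : ℕ → ℝ} (ha0 : ∀ i, 0 ≤ a i) (s : Finset ℕ) :
    (1 : ℝ) ≤ ∏ i ∈ s, (1 + a i) :=
  calc (1:ℝ) = ∏ _i ∈ s, 1 := Finset.prod_const_one.symm
    _ ≤ _ := Finset.prod_le_prod (fun i _ => zero_le_one) (fun i _ => by linarith [ha0 i])

private lemma aux_one_add {a : ℕ → ℝ} (ha0 : ∀ i, 0 ≤ a i) (ha : Summable a) :
    Multipliable (fun i => 1 + a i) ∧ 1 ≤ ∏' i, (1 + a i) := by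
  set f : Finset ℕ → ℝ := fun s => ∏ i ∈ s, (1 + a i) with hf
  have hmono : Monotone f := by
    intro s t hst
    have h1 := aux_one_le_prod ha0 (t \ s)
    have h2 : (0:ℝ) ≤ ∏ i ∈ s, (1 + a i) :=
      Finset.prod_nonneg (fun i _ => by linarith [ha0 i])
    have h3 := Finset.prod_sdiff (f := fun i => 1 + a i) hst
    simp only [hf]
    nlinarith [h3]
  have hbd : ∀ s, f s ≤ Real.exp (∑' i, a i) := by
    intro s
    calc f s ≤ ∏ i ∈ s, Real.exp (a i) :=
          Finset.prod_le_prod (fun i _ => by linarith [ha0 i])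
            (fun i _ => by linarith [Real.add_one_le_exp (a i)])
      _ = Real.exp (∑ i ∈ s, a i) := (Real.exp_sum s a).symm
      _ ≤ Real.exp (∑' i, a i) :=
          Real.exp_le_exp.2 (ha.sum_le_tsum s (fun i _ => ha0 i))
  have hbdd : BddAbove (Set.range f) := ⟨Real.exp (∑' i, a i), by rintro _ ⟨s, rfl⟩; exact hbd s⟩
  have hprod : HasProd (fun i => 1 + a i) (⨆ s, f s) := tendsto_atTop_ciSup hmono hbdd
  refine ⟨hprod.multipliable, ?_⟩
  rw [hprod.tprod_eq]
  have := le_ciSup hbdd (∅ : Finset ℕ)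
  simpa [f] using this

noncomputable def bb (q T lam : ℝ) (v : ℝ → ℝ) (i : ℕ) : ℝ :=
  (1 - q) * lam * (q ^ i * T) * v (q ^ i * T)

noncomputable def GG (q T lam : ℝ) (v : ℝ → ℝ) (m : ℕ) : ℝ :=
  ∏' i : ℕ, (1 + bb q T lam v (i + m))


/-- Lower bound for the Jackson integral of the kernel (inequality (2.9) of the paper):
for `λ > 0`, `∫_0^T Γ_{υ,λ}(s) d_q s ≥ Γ_{υ,λ}(T)/(λβ) − 1/(λβ)` (since `Γ_{υ,λ}(0) = 1`). -/
theorem kernel_jackson_lower_bound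
    (q T α β lam : ℝ) (v : ℝ → ℝ)
    (hq0 : 0 < q) (hq1 : q < 1) (hT : 0 < T)
    (hvcont : ContinuousOn v (Set.Icc 0 T))
    (hα : 0 < α)
    (hv : ∀ t ∈ Set.Icc (0 : ℝ) T, α ≤ v t ∧ v t ≤ β)
    (hlam : 0 < lam) :
    qGamma q lam v T / (lam * β) - 1 / (lam * β)
      ≤ jacksonIntegral q T (qGamma q lam v) := by
  simp only [jacksonIntegral]
  have hq1' : 0 < 1 - q := by linarith
  set b : ℕ → ℝ := bb q T lam v with hbdef
  set G : ℕ → ℝ := GG q T lam v with hGdef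
  have hmem : ∀ i : ℕ, q ^ i * T ∈ Set.Icc (0:ℝ) T := by
    intro i
    constructor
    · positivity
    · have h1 : q ^ i ≤ 1 := pow_le_one₀ hq0.le hq1.le
      nlinarith
  have hβ : 0 < β := by
    have h := hv T ⟨hT.le, le_refl T⟩
    linarith
  have hb0 : ∀ i, 0 ≤ b i := by
    intro i
    have h := (hv _ (hmem i)).1
    have : (0:ℝ) < v (q ^ i * T) := lt_of_lt_of_le hα h
    simp only [hbdef, bb]
    positivity
  have hbub : ∀ i, b i ≤ ((1 - q) * lam * β * T) * q ^ i := by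
    intro i
    have h := (hv _ (hmem i)).2
    have h1 : (0:ℝ) ≤ (1 - q) * lam * (q ^ i * T) := by positivity
    have h2 := mul_le_mul_of_nonneg_left h h1
    simp only [hbdef, bb]
    nlinarith
  have hbsum : Summable b :=
    Summable.of_nonneg_of_le hb0 hbub
      (((summable_geometric_of_lt_one hq0.le hq1).mul_left _))
  have hmul : ∀ m, Multipliable (fun i => 1 + b (i + m)) := fun m =>
    (aux_one_add (fun i => hb0 _) ((summable_nat_add_iff m).2 hbsum)).1
  have hG1 : ∀ m, 1 ≤ G m := fun m =>
    (aux_one_add (fun i => hb0 _) ((summable_nat_add_iff m).2 hbsum)).2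
  have hqG : ∀ m : ℕ, qGamma q lam v (q ^ m * T) = G m := by
    intro m
    simp only [qGamma, hGdef, GG]
    refine tprod_congr fun i => ?_
    have harg : q ^ i * (q ^ m * T) = q ^ (i + m) * T := by rw [← mul_assoc, ← pow_add]
    rw [harg]
    simp only [hbdef, bb]
    ring
  have hPG : ∀ m : ℕ, (∏ i ∈ Finset.range m, (1 + b i)) * G m = G 0 := by
    intro m
    have h := Multipliable.prod_mul_tprod_nat_mul' (f := fun i => 1 + b i) (k := m) (hmul m)
    simpa [hGdef, GG] using h
  have hrec : ∀ m : ℕ, G m = (1 + b m) * G (m + 1) := by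
    intro m
    have hshift : (fun i : ℕ => 1 + b (i + 1 + m)) = fun i : ℕ => 1 + b (i + (m + 1)) := by
      funext i
      have h : i + 1 + m = i + (m + 1) := by omega
      rw [h]
    have hm' : Multipliable (fun i : ℕ => (fun j : ℕ => 1 + b (j + m)) (i + 1)) := by
      simpa [hshift] using hmul (m + 1)
    have h := tprod_eq_zero_mul' (f := fun i : ℕ => 1 + b (i + m)) hm'
    simp only [hGdef, GG]
    rw [h]
    simp [hshift]
    exact Or.inl rfl
  have hGmono : ∀ m, G (m + 1) ≤ G m := by
    intro m
    nlinarith [hrec m, hG1 (m + 1), hb0 m]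
  have hGle : ∀ m, G m ≤ G 0 := by
    intro m
    have h1 := aux_one_le_prod hb0 (Finset.range m)
    nlinarith [hPG m, hG1 m]
  have hterm0 : ∀ m : ℕ, 0 ≤ q ^ m * G m := by
    intro m
    have := hG1 m
    positivity
  have hSsum : Summable (fun m : ℕ => q ^ m * G m) := by
    refine Summable.of_nonneg_of_le hterm0 (fun m => ?_)
      (((summable_geometric_of_lt_one hq0.le hq1).mul_left (G 0)))
    have h1 : 0 < q ^ m := pow_pos hq0 m
    nlinarith [hGle m, hG1 m]
  set S : ℝ := ∑' m : ℕ, q ^ m * G m with hSdef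
  have hstep : ∀ m : ℕ, G m - G (m + 1) ≤ ((1 - q) * lam * β * T) * (q ^ m * G m) := by
    intro m
    have h1 : b m * G (m + 1) ≤ ((1 - q) * lam * β * T * q ^ m) * G m :=
      mul_le_mul (hbub m) (hGmono m) (by linarith [hG1 (m + 1)]) (by positivity)
    nlinarith [hrec m]
  have htel : ∀ N : ℕ, G 0 - G N ≤ ((1 - q) * lam * β * T) * S := by
    intro N
    calc G 0 - G N = ∑ m ∈ Finset.range N, (G m - G (m + 1)) :=
          (Finset.sum_range_sub' G N).symm
      _ ≤ ∑ m ∈ Finset.range N, ((1 - q) * lam * β * T) * (q ^ m * G m) :=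
          Finset.sum_le_sum fun m _ => hstep m
      _ = ((1 - q) * lam * β * T) * ∑ m ∈ Finset.range N, q ^ m * G m := by
          rw [Finset.mul_sum]
      _ ≤ ((1 - q) * lam * β * T) * S := by
          refine mul_le_mul_of_nonneg_left ?_ (by positivity)
          exact hSsum.sum_le_tsum _ (fun m _ => hterm0 m)
  -- limit of G N is 1
  have hHP : HasProd (fun i => 1 + b i) (G 0) := by
    have h := (hmul 0).hasProd
    simpa [hGdef, GG] using h
  have hG0pos : (0:ℝ) < G 0 := lt_of_lt_of_le zero_lt_one (hG1 0)
  have hPlim : Tendsto (fun N => ∏ i ∈ Finset.range N, (1 + b i)) atTop (𝓝 (G 0)) :=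
    hHP.tendsto_prod_nat
  have hGdiv : ∀ N, G N = G 0 / ∏ i ∈ Finset.range N, (1 + b i) := by
    intro N
    have hP1 : (1:ℝ) ≤ ∏ i ∈ Finset.range N, (1 + b i) := aux_one_le_prod hb0 _
    rw [eq_div_iff (by linarith)]
    rw [mul_comm]
    exact hPG N
  have hGlim : Tendsto G atTop (𝓝 1) := by
    have h := Tendsto.div (tendsto_const_nhds (x := G 0)) hPlim hG0pos.ne'
    rw [div_self hG0pos.ne'] at h
    exact h.congr fun N => (hGdiv N).symm
  have hfinal : G 0 - 1 ≤ ((1 - q) * lam * β * T) * S := by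
    have hlim2 : Tendsto (fun N => G 0 - G N) atTop (𝓝 (G 0 - 1)) :=
      tendsto_const_nhds.sub hGlim
    exact le_of_tendsto hlim2 (Filter.Eventually.of_forall htel)
  -- conclude
  have hsum_eq : (∑' m : ℕ, q ^ m * qGamma q lam v (q ^ m * T)) = S := by
    refine tsum_congr fun m => ?_
    rw [hqG m]
  have hT0 : qGamma q lam v T = G 0 := by
    have := hqG 0
    simpa using this
  rw [hsum_eq, hT0, div_sub_div_same, div_le_iff₀ (by positivity : (0:ℝ) < lam * β)]
  nlinarith [hfinal]
end

section
/- Exact-form reduction of the scalar q-ODE (identity (3.13) of the paper): if u:[0,T]→ℂ satisfies D_q u(t) + λ υ(t) u(t) = f(t) for all t ∈ (0,T], then D_q[Γ_{υ,λ}·u](t) = Γ_{υ,λ}(qt) f(t) for all t ∈ (0,T], where D_q g(t) = (g(t)−g(qt))/((1−q)t). -/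
open scoped BigOperators InnerProductSpace

lemma gamma_mult (q T α β lam : ℝ) (v : ℝ → ℝ)
    (hq0 : 0 < q) (hq1 : q < 1) (hα : 0 < α)
    (hv : ∀ t ∈ Set.Icc (0 : ℝ) T, α ≤ v t ∧ v t ≤ β)
    (hlam : 0 < lam) (t : ℝ) (ht : t ∈ Set.Ioc (0 : ℝ) T) :
    Multipliable (fun i : ℕ => 1 + (1 - q) * lam * q ^ i * t * v (q ^ i * t)) := by
  obtain ⟨ht0, htT⟩ := ht
  have h1q : (0:ℝ) < 1 - q := by linarith
  have hmem : ∀ i : ℕ, q ^ i * t ∈ Set.Icc (0 : ℝ) T := by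
    intro i
    constructor
    · positivity
    · calc q ^ i * t ≤ 1 * t := by
            apply mul_le_mul_of_nonneg_right _ ht0.le
            exact pow_le_one₀ hq0.le hq1.le
        _ = t := one_mul t
        _ ≤ T := htT
  have hpos : ∀ i : ℕ, (0:ℝ) < 1 + (1 - q) * lam * q ^ i * t * v (q ^ i * t) := by
    intro i
    have hvα : (0:ℝ) < v (q ^ i * t) := lt_of_lt_of_le hα (hv _ (hmem i)).1
    have := mul_pos (mul_pos (mul_pos (mul_pos h1q hlam) (pow_pos hq0 i)) ht0) hvα
    linarith
  have := Real.multipliable_of_summable_log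
    (f := fun i : ℕ => 1 + (1 - q) * lam * q ^ i * t * v (q ^ i * t))
    hpos ?_
  · exact this
  · show Summable fun i : ℕ => Real.log (1 + (1 - q) * lam * q ^ i * t * v (q ^ i * t))
    refine Summable.of_nonneg_of_le (g := fun i : ℕ =>
        Real.log (1 + (1 - q) * lam * q ^ i * t * v (q ^ i * t)))
      (f := fun i : ℕ => ((1 - q) * lam * t * β) * q ^ i) ?_ ?_
      ((summable_geometric_of_lt_one hq0.le hq1).mul_left _)
    · intro i
      have hvα : (0:ℝ) < v (q ^ i * t) := lt_of_lt_of_le hα (hv _ (hmem i)).1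
      have := mul_pos (mul_pos (mul_pos (mul_pos h1q hlam) (pow_pos hq0 i)) ht0) hvα
      exact Real.log_nonneg (by linarith)
    · intro i
      have hle := Real.log_le_sub_one_of_pos (hpos i)
      have hvβ := (hv _ (hmem i)).2
      have h1 : (1:ℝ) + (1 - q) * lam * q ^ i * t * v (q ^ i * t) - 1
          = (1 - q) * lam * q ^ i * t * v (q ^ i * t) := by ring
      rw [h1] at hle
      refine hle.trans ?_
      have hq' : (0:ℝ) ≤ (1 - q) * lam * q ^ i * t := by positivity
      calc (1 - q) * lam * q ^ i * t * v (q ^ i * t)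
          ≤ (1 - q) * lam * q ^ i * t * β := mul_le_mul_of_nonneg_left hvβ hq'
        _ = (1 - q) * lam * t * β * q ^ i := by ring

set_option maxHeartbeats 1000000 in
lemma gamma_step (q T α β lam : ℝ) (v : ℝ → ℝ)
    (hq0 : 0 < q) (hq1 : q < 1) (hα : 0 < α)
    (hv : ∀ t ∈ Set.Icc (0 : ℝ) T, α ≤ v t ∧ v t ≤ β)
    (hlam : 0 < lam) (t : ℝ) (ht : t ∈ Set.Ioc (0 : ℝ) T) :
    qGamma q lam v t
      = (1 + (1 - q) * lam * t * v t) * qGamma q lam v (q * t) := by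
  obtain ⟨ht0, htT⟩ := ht
  have hqt : q * t ∈ Set.Ioc (0 : ℝ) T := by
    constructor
    · positivity
    · nlinarith
  have hshift : ∀ i : ℕ,
      (1 : ℝ) + (1 - q) * lam * q ^ (i + 1) * t * v (q ^ (i + 1) * t)
        = 1 + (1 - q) * lam * q ^ i * (q * t) * v (q ^ i * (q * t)) := by
    intro i
    have h2 : q ^ (i + 1) * t = q ^ i * (q * t) := by ring
    rw [h2]
    ring
  have hmult' : Multipliable (fun i : ℕ =>
      1 + (1 - q) * lam * q ^ (i + 1) * t * v (q ^ (i + 1) * t)) := by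
    refine (gamma_mult q T α β lam v hq0 hq1 hα hv hlam (q * t) hqt).congr ?_
    intro i
    exact (hshift i).symm
  unfold qGamma
  rw [tprod_eq_zero_mul' hmult', tprod_congr hshift]
  simp only [pow_zero, one_mul, mul_one]

/-- Exact-form reduction of the scalar q-ODE (identity (3.13) of the paper): if
`u : [0,T] → ℂ` satisfies `D_q u(t) + λ υ(t) u(t) = f(t)` for all `t ∈ (0,T]`, then
`D_q[Γ_{υ,λ}·u](t) = Γ_{υ,λ}(qt) f(t)` for all `t ∈ (0,T]`. -/

theorem exact_form_reduction
    (q T α β lam : ℝ) (v : ℝ → ℝ) (u f : ℝ → ℂ)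
    (hq0 : 0 < q) (hq1 : q < 1)
    (hvcont : ContinuousOn v (Set.Icc 0 T))
    (hα : 0 < α)
    (hv : ∀ t ∈ Set.Icc (0 : ℝ) T, α ≤ v t ∧ v t ≤ β)
    (hlam : 0 < lam)
    (hu : ∀ t ∈ Set.Ioc (0 : ℝ) T,
      qDerivC q u t + ((lam * v t : ℝ) : ℂ) * u t = f t) :
    ∀ t ∈ Set.Ioc (0 : ℝ) T,
      qDerivC q (fun s => ((qGamma q lam v s : ℝ) : ℂ) * u s) t
        = ((qGamma q lam v (q * t) : ℝ) : ℂ) * f t := by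
  intro t ht
  obtain ⟨ht0, htT⟩ := ht
  have hd : ((1 - q) * t : ℝ) ≠ 0 := by
    have : (0:ℝ) < 1 - q := by linarith
    positivity
  have hdC : (((1 - q) * t : ℝ) : ℂ) ≠ 0 := by exact_mod_cast hd
  have hstep := gamma_step q T α β lam v hq0 hq1 hα hv hlam t ⟨ht0, htT⟩
  have hf := hu t ⟨ht0, htT⟩
  unfold qDerivC at hf ⊢
  rw [div_add' _ _ _ hdC] at hf
  have hf' : u t - u (q * t) + ((lam * v t : ℝ) : ℂ) * u t * (((1 - q) * t : ℝ) : ℂ)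
      = f t * (((1 - q) * t : ℝ) : ℂ) := by
    exact (div_eq_iff hdC).mp hf
  rw [div_eq_iff hdC]
  simp only
  rw [hstep]
  push_cast
  push_cast at hf'
  linear_combination ((qGamma q lam v (q * t) : ℝ) : ℂ) * hf'
end

section
/- Solution of the scalar q-Cauchy problem: let λ > 0, c ∈ ℂ and let f:[0,T]→ℂ be bounded. Then the function u(t) = γ_{υ,λ}(t)·[c + ∫_0^t Γ_{υ,λ}(qs) f(s) d_q s] satisfies D_q u(t) + λ υ(t) u(t) = f(t) for all t ∈ (0,T] together with u(0) = c; moreover u is the unique function continuous at 0 with these properties. -/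
open scoped BigOperators InnerProductSpace

/-- The candidate solution `u(t) = γ_{υ,λ}(t)·[c + ∫_0^t Γ_{υ,λ}(qs) f(s) d_q s]` of the
scalar q-Cauchy problem. -/
noncomputable def qHeatSol (q lam : ℝ) (v : ℝ → ℝ) (c : ℂ) (f : ℝ → ℂ) (t : ℝ) : ℂ :=
  (((qGamma q lam v t)⁻¹ : ℝ) : ℂ) *
    (c + jacksonIntegralC q t (fun s => ((qGamma q lam v (q * s) : ℝ) : ℂ) * f s))

private lemma hasProd_exp_of_summable_log {a : ℕ → ℝ} (hpos : ∀ i, 0 < a i)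
    (hs : Summable fun i => Real.log (a i)) :
    HasProd a (Real.exp (∑' i, Real.log (a i))) := by
  have h := hs.hasSum.rexp
  have he : (Real.exp ∘ fun i => Real.log (a i)) = a :=
    funext fun i => Real.exp_log (hpos i)
  rwa [he] at h

private lemma exp_sub_one_le' (x : ℝ) : Real.exp x - 1 ≤ x * Real.exp x := by
  have h := Real.add_one_le_exp (-x)
  have h2 : (-x + 1) * Real.exp x ≤ Real.exp (-x) * Real.exp x :=
    mul_le_mul_of_nonneg_right h (Real.exp_pos x).le
  rw [← Real.exp_add, neg_add_cancel, Real.exp_zero] at h2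
  nlinarith [h2]

private lemma jackson_summable {q : ℝ} (hq0 : 0 < q) (hq1 : q < 1) (g : ℝ → ℂ) (t K : ℝ)
    (hb : ∀ m : ℕ, ‖g (q ^ m * t)‖ ≤ K) :
    Summable fun m : ℕ => (q : ℂ) ^ m * g (q ^ m * t) := by
  have hgeo : Summable fun m : ℕ => q ^ m := summable_geometric_of_lt_one hq0.le hq1
  have hq' : ‖(q : ℂ)‖ = q := by
    rw [Complex.norm_real, Real.norm_eq_abs, abs_of_nonneg hq0.le]
  refine Summable.of_norm (Summable.of_nonneg_of_le (fun m => norm_nonneg _) (fun m => ?_)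
    (hgeo.mul_right K))
  rw [norm_mul, norm_pow, hq']
  exact mul_le_mul_of_nonneg_left (hb m) (pow_nonneg hq0.le m)

private lemma jackson_telescope {q : ℝ} (g : ℝ → ℂ) (t : ℝ)
    (hs : Summable fun m : ℕ => (q : ℂ) ^ m * g (q ^ m * t)) :
    jacksonIntegralC q t g - jacksonIntegralC q (q * t) g = (((1 - q) * t : ℝ) : ℂ) * g t := by
  rw [jacksonIntegralC, jacksonIntegralC]
  have h2 : (∑' m : ℕ, (q : ℂ) ^ m * g (q ^ m * (q * t)))
      = ∑' m : ℕ, (q : ℂ) ^ m * g (q ^ (m + 1) * t) :=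
    tsum_congr fun m => by rw [show q ^ m * (q * t) = q ^ (m + 1) * t from by ring]
  rw [h2, Summable.tsum_eq_zero_add hs]
  have h3 : (∑' m : ℕ, (q : ℂ) ^ (m + 1) * g (q ^ (m + 1) * t))
      = (q : ℂ) * ∑' m : ℕ, (q : ℂ) ^ m * g (q ^ (m + 1) * t) := by
    rw [← tsum_mul_left]
    exact tsum_congr fun m => by ring
  rw [h3]
  simp only [pow_zero, one_mul]
  push_cast
  ring

private lemma jackson_norm_le {q : ℝ} (hq0 : 0 < q) (hq1 : q < 1) (g : ℝ → ℂ) (t K : ℝ)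
    (ht : 0 ≤ t) (hb : ∀ m : ℕ, ‖g (q ^ m * t)‖ ≤ K) :
    ‖jacksonIntegralC q t g‖ ≤ t * K := by
  have hq1' : (0 : ℝ) < 1 - q := by linarith
  have hgeo : Summable fun m : ℕ => q ^ m := summable_geometric_of_lt_one hq0.le hq1
  have hq' : ‖(q : ℂ)‖ = q := by
    rw [Complex.norm_real, Real.norm_eq_abs, abs_of_nonneg hq0.le]
  have hnorm : ∀ m : ℕ, ‖(q : ℂ) ^ m * g (q ^ m * t)‖ ≤ q ^ m * K := by
    intro m
    rw [norm_mul, norm_pow, hq']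
    exact mul_le_mul_of_nonneg_left (hb m) (pow_nonneg hq0.le m)
  have hsnorm : Summable fun m : ℕ => ‖(q : ℂ) ^ m * g (q ^ m * t)‖ :=
    Summable.of_nonneg_of_le (fun m => norm_nonneg _) hnorm (hgeo.mul_right K)
  rw [jacksonIntegralC, norm_mul]
  have h1 : ‖∑' m : ℕ, (q : ℂ) ^ m * g (q ^ m * t)‖ ≤ ∑' m : ℕ, q ^ m * K :=
    le_trans (norm_tsum_le_tsum_norm hsnorm) (Summable.tsum_le_tsum hnorm hsnorm (hgeo.mul_right K))
  have h2 : (∑' m : ℕ, q ^ m * K) = (1 - q)⁻¹ * K := by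
    rw [tsum_mul_right, tsum_geometric_of_lt_one hq0.le hq1]
  rw [h2] at h1
  have h3 : ‖(((1 - q) * t : ℝ) : ℂ)‖ = (1 - q) * t := by
    rw [Complex.norm_real, Real.norm_eq_abs, abs_of_nonneg (mul_nonneg hq1'.le ht)]
  rw [h3]
  calc (1 - q) * t * ‖∑' m : ℕ, (q : ℂ) ^ m * g (q ^ m * t)‖
      ≤ (1 - q) * t * ((1 - q)⁻¹ * K) :=
        mul_le_mul_of_nonneg_left h1 (mul_nonneg hq1'.le ht)
    _ = t * K := by field_simp

/-- Solution of the scalar q-Cauchy problem: for `λ > 0`, `c ∈ ℂ` and bounded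
`f : [0,T] → ℂ`, the function `u(t) = γ_{υ,λ}(t)·[c + ∫_0^t Γ_{υ,λ}(qs) f(s) d_q s]`
satisfies `D_q u(t) + λ υ(t) u(t) = f(t)` on `(0,T]`, `u(0) = c`, and it is the unique
such function which is continuous at `0`. -/
theorem scalar_qCauchy_solution
    (q T α β lam : ℝ) (v : ℝ → ℝ) (c : ℂ) (f : ℝ → ℂ)
    (hq0 : 0 < q) (hq1 : q < 1) (hT : 0 < T)
    (hvcont : ContinuousOn v (Set.Icc 0 T))
    (hα : 0 < α)
    (hv : ∀ t ∈ Set.Icc (0 : ℝ) T, α ≤ v t ∧ v t ≤ β)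
    (hlam : 0 < lam)
    (hfb : ∃ M, ∀ t ∈ Set.Icc (0 : ℝ) T, ‖f t‖ ≤ M) :
    (∀ t ∈ Set.Ioc (0 : ℝ) T,
      qDerivC q (qHeatSol q lam v c f) t
        + ((lam * v t : ℝ) : ℂ) * qHeatSol q lam v c f t = f t) ∧
    qHeatSol q lam v c f 0 = c ∧
    ContinuousWithinAt (qHeatSol q lam v c f) (Set.Icc 0 T) 0 ∧
    (∀ w : ℝ → ℂ,
      ContinuousWithinAt w (Set.Icc 0 T) 0 →
      (∀ t ∈ Set.Ioc (0 : ℝ) T,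
        qDerivC q w t + ((lam * v t : ℝ) : ℂ) * w t = f t) →
      w 0 = c →
      ∀ t ∈ Set.Icc (0 : ℝ) T, w t = qHeatSol q lam v c f t) := by
  obtain ⟨M, hM⟩ := hfb
  have h0T : (0:ℝ) ∈ Set.Icc (0:ℝ) T := ⟨le_refl 0, hT.le⟩
  have hM0 : 0 ≤ M := le_trans (norm_nonneg _) (hM 0 h0T)
  have hq1' : (0:ℝ) < 1 - q := by linarith
  have hβ : 0 < β := lt_of_lt_of_le hα (le_trans (hv 0 h0T).1 (hv 0 h0T).2)
  have hmem : ∀ t ∈ Set.Icc (0:ℝ) T, ∀ i : ℕ, q ^ i * t ∈ Set.Icc (0:ℝ) T := by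
    intro t ht i
    refine ⟨mul_nonneg (pow_nonneg hq0.le i) ht.1, ?_⟩
    calc q ^ i * t ≤ 1 * t := mul_le_mul_of_nonneg_right (pow_le_one₀ hq0.le hq1.le) ht.1
      _ = t := one_mul t
      _ ≤ T := ht.2
  have hqmem : ∀ t ∈ Set.Icc (0:ℝ) T, q * t ∈ Set.Icc (0:ℝ) T := by
    intro t ht
    have := hmem t ht 1
    rwa [pow_one] at this
  have hb_nonneg : ∀ t ∈ Set.Icc (0:ℝ) T, ∀ i : ℕ,
      0 ≤ (1 - q) * lam * q ^ i * t * v (q ^ i * t) := by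
    intro t ht i
    have hv0 : 0 ≤ v (q ^ i * t) := le_trans hα.le (hv _ (hmem t ht i)).1
    exact mul_nonneg (mul_nonneg (mul_nonneg (mul_nonneg hq1'.le hlam.le)
      (pow_nonneg hq0.le i)) ht.1) hv0
  have hb_le : ∀ t ∈ Set.Icc (0:ℝ) T, ∀ i : ℕ,
      (1 - q) * lam * q ^ i * t * v (q ^ i * t) ≤ (1 - q) * (lam * β * t) * q ^ i := by
    intro t ht i
    have hvle : v (q ^ i * t) ≤ β := (hv _ (hmem t ht i)).2
    have h1 : 0 ≤ (1 - q) * lam * q ^ i * t :=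
      mul_nonneg (mul_nonneg (mul_nonneg hq1'.le hlam.le) (pow_nonneg hq0.le i)) ht.1
    calc (1 - q) * lam * q ^ i * t * v (q ^ i * t) ≤ (1 - q) * lam * q ^ i * t * β :=
          mul_le_mul_of_nonneg_left hvle h1
      _ = (1 - q) * (lam * β * t) * q ^ i := by ring
  have hgeo : Summable fun i : ℕ => q ^ i := summable_geometric_of_lt_one hq0.le hq1
  have hb_sum : ∀ t ∈ Set.Icc (0:ℝ) T,
      Summable fun i : ℕ => (1 - q) * lam * q ^ i * t * v (q ^ i * t) := fun t ht =>
    Summable.of_nonneg_of_le (hb_nonneg t ht) (hb_le t ht) (hgeo.mul_left _)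
  have hfac_pos : ∀ t ∈ Set.Icc (0:ℝ) T, ∀ i : ℕ,
      0 < 1 + (1 - q) * lam * q ^ i * t * v (q ^ i * t) := fun t ht i => by
    linarith [hb_nonneg t ht i]
  have hlog_sum : ∀ t ∈ Set.Icc (0:ℝ) T,
      Summable fun i : ℕ => Real.log (1 + (1 - q) * lam * q ^ i * t * v (q ^ i * t)) := by
    intro t ht
    refine Summable.of_nonneg_of_le (fun i => Real.log_nonneg (by linarith [hb_nonneg t ht i]))
      (fun i => ?_) (hb_sum t ht)
    have := Real.log_le_sub_one_of_pos (hfac_pos t ht i)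
    linarith
  have hGamma_eq : ∀ t ∈ Set.Icc (0:ℝ) T, qGamma q lam v t
      = Real.exp (∑' i : ℕ, Real.log (1 + (1 - q) * lam * q ^ i * t * v (q ^ i * t))) :=
    fun t ht => (hasProd_exp_of_summable_log (hfac_pos t ht) (hlog_sum t ht)).tprod_eq
  have htsum_nonneg : ∀ t ∈ Set.Icc (0:ℝ) T,
      0 ≤ ∑' i : ℕ, Real.log (1 + (1 - q) * lam * q ^ i * t * v (q ^ i * t)) := fun t ht =>
    tsum_nonneg fun i => Real.log_nonneg (by linarith [hb_nonneg t ht i])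
  have htsum_le : ∀ t ∈ Set.Icc (0:ℝ) T,
      (∑' i : ℕ, Real.log (1 + (1 - q) * lam * q ^ i * t * v (q ^ i * t))) ≤ lam * β * t := by
    intro t ht
    have h1 : (∑' i : ℕ, Real.log (1 + (1 - q) * lam * q ^ i * t * v (q ^ i * t)))
        ≤ ∑' i : ℕ, (1 - q) * (lam * β * t) * q ^ i := by
      refine Summable.tsum_le_tsum (fun i => ?_) (hlog_sum t ht) (hgeo.mul_left _)
      have h2 := Real.log_le_sub_one_of_pos (hfac_pos t ht i)
      linarith [hb_le t ht i]
    rw [tsum_mul_left, tsum_geometric_of_lt_one hq0.le hq1] at h1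
    calc (∑' i : ℕ, Real.log (1 + (1 - q) * lam * q ^ i * t * v (q ^ i * t)))
        ≤ (1 - q) * (lam * β * t) * (1 - q)⁻¹ := h1
      _ = lam * β * t := by field_simp
  have hG_ge1 : ∀ t ∈ Set.Icc (0:ℝ) T, 1 ≤ qGamma q lam v t := fun t ht => by
    rw [hGamma_eq t ht]; exact Real.one_le_exp (htsum_nonneg t ht)
  have hG_le : ∀ t ∈ Set.Icc (0:ℝ) T, qGamma q lam v t ≤ Real.exp (lam * β * t) := fun t ht => by
    rw [hGamma_eq t ht]; exact Real.exp_le_exp.2 (htsum_le t ht)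
  have hG_rec : ∀ t ∈ Set.Icc (0:ℝ) T,
      qGamma q lam v t = (1 + (1 - q) * lam * t * v t) * qGamma q lam v (q * t) := by
    intro t ht
    have hqt : q * t ∈ Set.Icc (0:ℝ) T := hqmem t ht
    rw [hGamma_eq t ht, hGamma_eq (q * t) hqt, Summable.tsum_eq_zero_add (hlog_sum t ht), Real.exp_add]
    congr 1
    · rw [Real.exp_log (hfac_pos t ht 0)]
      norm_num
    · congr 1
      refine tsum_congr fun i => ?_
      rw [show q ^ i * (q * t) = q ^ (i + 1) * t from by ring]
      congr 1
      ring
  have hJb : ∀ t ∈ Set.Icc (0:ℝ) T, ∀ m : ℕ,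
      ‖((qGamma q lam v (q * (q ^ m * t)) : ℝ) : ℂ) * f (q ^ m * t)‖
        ≤ Real.exp (lam * β * T) * M := by
    intro t ht m
    have h1 : q * (q ^ m * t) ∈ Set.Icc (0:ℝ) T := hqmem _ (hmem t ht m)
    rw [norm_mul, Complex.norm_real, Real.norm_eq_abs,
      abs_of_nonneg (by linarith [hG_ge1 _ h1] : (0:ℝ) ≤ qGamma q lam v (q * (q ^ m * t)))]
    have hΓle : qGamma q lam v (q * (q ^ m * t)) ≤ Real.exp (lam * β * T) :=
      le_trans (hG_le _ h1)
        (Real.exp_le_exp.2 (mul_le_mul_of_nonneg_left h1.2 (mul_nonneg hlam.le hβ.le)))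
    exact mul_le_mul hΓle (hM _ (hmem t ht m)) (norm_nonneg _) (Real.exp_pos _).le
  have hJsum : ∀ t ∈ Set.Icc (0:ℝ) T,
      Summable fun m : ℕ => (q : ℂ) ^ m *
        ((qGamma q lam v (q * (q ^ m * t)) : ℝ) : ℂ) * f (q ^ m * t) := by
    intro t ht
    have := jackson_summable hq0 hq1
      (fun s => ((qGamma q lam v (q * s) : ℝ) : ℂ) * f s) t _ (hJb t ht)
    simpa [mul_assoc] using this
  have hJnorm : ∀ t ∈ Set.Icc (0:ℝ) T,
      ‖jacksonIntegralC q t (fun s => ((qGamma q lam v (q * s) : ℝ) : ℂ) * f s)‖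
        ≤ t * (Real.exp (lam * β * T) * M) := fun t ht =>
    jackson_norm_le hq0 hq1 _ t _ ht.1 (hJb t ht)
  -- u(0) = c
  have hu0 : qHeatSol q lam v c f 0 = c := by
    have hΓ0 : qGamma q lam v 0 = 1 := by
      rw [qGamma]
      simp [tprod_one]
    rw [qHeatSol, jacksonIntegralC, hΓ0]
    norm_num
  -- the q-difference equation
  have hmain : ∀ t ∈ Set.Ioc (0:ℝ) T,
      qDerivC q (qHeatSol q lam v c f) t
        + ((lam * v t : ℝ) : ℂ) * qHeatSol q lam v c f t = f t := by
    intro t ht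
    have htI : t ∈ Set.Icc (0:ℝ) T := ⟨ht.1.le, ht.2⟩
    have hqtI : q * t ∈ Set.Icc (0:ℝ) T := hqmem t htI
    have hsum : Summable fun m : ℕ => (q : ℂ) ^ m *
        ((fun s => ((qGamma q lam v (q * s) : ℝ) : ℂ) * f s) (q ^ m * t)) := by
      have := hJsum t htI
      simpa [mul_assoc] using this
    have htel := jackson_telescope
      (fun s => ((qGamma q lam v (q * s) : ℝ) : ℂ) * f s) t hsum
    have hJeq : jacksonIntegralC q t (fun s => ((qGamma q lam v (q * s) : ℝ) : ℂ) * f s)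
        = jacksonIntegralC q (q * t) (fun s => ((qGamma q lam v (q * s) : ℝ) : ℂ) * f s)
          + (((1 - q) * t : ℝ) : ℂ) * (((qGamma q lam v (q * t) : ℝ) : ℂ) * f t) := by
      linear_combination htel
    have hArec := hG_rec t htI
    have hA1 : 1 ≤ 1 + (1 - q) * lam * t * v t := by
      have h := hb_nonneg t htI 0
      simp only [pow_zero, mul_one, one_mul] at h
      linarith
    have hΓqt1 : 1 ≤ qGamma q lam v (q * t) := hG_ge1 _ hqtI
    have hq'' : (1 : ℂ) - (q : ℂ) ≠ 0 := by
      rw [show (1:ℂ) - (q:ℂ) = ((1 - q : ℝ) : ℂ) by push_cast; ring]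
      exact Complex.ofReal_ne_zero.mpr hq1'.ne'
    have ht' : (t : ℂ) ≠ 0 := Complex.ofReal_ne_zero.mpr ht.1.ne'
    have hΓ' : ((qGamma q lam v (q * t) : ℝ) : ℂ) ≠ 0 :=
      Complex.ofReal_ne_zero.mpr (by linarith)
    have hA' : (1 : ℂ) + (1 - (q : ℂ)) * (lam : ℂ) * (t : ℂ) * ((v t : ℝ) : ℂ) ≠ 0 := by
      rw [show (1:ℂ) + (1 - (q:ℂ)) * (lam:ℂ) * (t:ℂ) * ((v t : ℝ):ℂ)
            = ((1 + (1 - q) * lam * t * v t : ℝ) : ℂ) by push_cast; ring]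
      exact Complex.ofReal_ne_zero.mpr (by linarith)
    simp only [qDerivC, qHeatSol]
    rw [hJeq, hArec]
    push_cast
    rw [div_add' _ _ _ (mul_ne_zero hq'' ht'), div_eq_iff (mul_ne_zero hq'' ht')]
    field_simp
    ring
  -- continuity at 0
  have hcont : ContinuousWithinAt (qHeatSol q lam v c f) (Set.Icc 0 T) 0 := by
    set K : ℝ := lam * β * Real.exp (lam * β * T) * ‖c‖ + Real.exp (lam * β * T) * M with hK
    have hbound : ∀ t ∈ Set.Icc (0:ℝ) T, ‖qHeatSol q lam v c f t - c‖ ≤ K * t := by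
      intro t ht
      have hΓ1 : 1 ≤ qGamma q lam v t := hG_ge1 t ht
      have hΓpos : 0 < qGamma q lam v t := lt_of_lt_of_le one_pos hΓ1
      have hinv : qGamma q lam v t * (qGamma q lam v t)⁻¹ = 1 := mul_inv_cancel₀ hΓpos.ne'
      have hsplit : qHeatSol q lam v c f t - c
          = (((qGamma q lam v t)⁻¹ - 1 : ℝ) : ℂ) * c
            + (((qGamma q lam v t)⁻¹ : ℝ) : ℂ)
              * jacksonIntegralC q t (fun s => ((qGamma q lam v (q * s) : ℝ) : ℂ) * f s) := by
        rw [qHeatSol]; push_cast; ring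
      rw [hsplit]
      have hinvle : (qGamma q lam v t)⁻¹ ≤ 1 := by nlinarith [hinv]
      have hinvnn : 0 ≤ (qGamma q lam v t)⁻¹ := inv_nonneg.mpr hΓpos.le
      have h1 : ‖(((qGamma q lam v t)⁻¹ - 1 : ℝ) : ℂ)‖
          ≤ lam * β * Real.exp (lam * β * T) * t := by
        rw [Complex.norm_real, Real.norm_eq_abs, abs_of_nonpos (by linarith)]
        have h2 : 1 - (qGamma q lam v t)⁻¹ ≤ qGamma q lam v t - 1 := by nlinarith [hinv]
        have h3 : qGamma q lam v t - 1 ≤ lam * β * t * Real.exp (lam * β * t) := by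
          have h3a := hG_le t ht
          have h3b := exp_sub_one_le' (lam * β * t)
          linarith
        have h5 : lam * β * t * Real.exp (lam * β * t)
            ≤ lam * β * t * Real.exp (lam * β * T) := by
          refine mul_le_mul_of_nonneg_left (Real.exp_le_exp.2 ?_) ?_
          · exact mul_le_mul_of_nonneg_left ht.2 (mul_nonneg hlam.le hβ.le)
          · exact mul_nonneg (mul_nonneg hlam.le hβ.le) ht.1
        nlinarith [h2, h3, h5]
      have h6 : ‖(((qGamma q lam v t)⁻¹ : ℝ) : ℂ)‖ ≤ 1 := by
        rw [Complex.norm_real, Real.norm_eq_abs, abs_of_nonneg hinvnn]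
        exact hinvle
      have h7 := hJnorm t ht
      calc ‖(((qGamma q lam v t)⁻¹ - 1 : ℝ) : ℂ) * c
            + (((qGamma q lam v t)⁻¹ : ℝ) : ℂ)
              * jacksonIntegralC q t (fun s => ((qGamma q lam v (q * s) : ℝ) : ℂ) * f s)‖
          ≤ ‖(((qGamma q lam v t)⁻¹ - 1 : ℝ) : ℂ) * c‖
            + ‖(((qGamma q lam v t)⁻¹ : ℝ) : ℂ)
              * jacksonIntegralC q t (fun s => ((qGamma q lam v (q * s) : ℝ) : ℂ) * f s)‖ :=
            norm_add_le _ _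
        _ ≤ (lam * β * Real.exp (lam * β * T) * t) * ‖c‖
            + 1 * (t * (Real.exp (lam * β * T) * M)) := by
            rw [norm_mul, norm_mul]
            refine add_le_add (mul_le_mul_of_nonneg_right h1 (norm_nonneg _)) ?_
            exact mul_le_mul h6 h7 (norm_nonneg _) zero_le_one
        _ = K * t := by rw [hK]; ring
    show Filter.Tendsto (qHeatSol q lam v c f) (nhdsWithin 0 (Set.Icc (0:ℝ) T))
      (nhds (qHeatSol q lam v c f 0))
    rw [hu0]
    have hKt : Filter.Tendsto (fun t : ℝ => K * t) (nhdsWithin 0 (Set.Icc (0:ℝ) T)) (nhds 0) := by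
      have h8 : Filter.Tendsto (fun t : ℝ => K * t) (nhds 0) (nhds (K * 0)) :=
        (continuous_const.mul continuous_id).tendsto 0
      rw [mul_zero] at h8
      exact h8.mono_left nhdsWithin_le_nhds
    have hz : Filter.Tendsto (fun t => qHeatSol q lam v c f t - c)
        (nhdsWithin 0 (Set.Icc (0:ℝ) T)) (nhds 0) :=
      squeeze_zero_norm'
        (by filter_upwards [eventually_mem_nhdsWithin] with t ht using hbound t ht) hKt
    have h9 := hz.add_const c
    simpa using h9
  -- recurrence satisfied by any solution
  have hrecz : ∀ z : ℝ → ℂ,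
      (∀ s ∈ Set.Ioc (0:ℝ) T, qDerivC q z s + ((lam * v s : ℝ) : ℂ) * z s = f s) →
      ∀ s ∈ Set.Ioc (0:ℝ) T,
        z (q * s) = ((1 + (1 - q) * lam * s * v s : ℝ) : ℂ) * z s
          - (((1 - q) * s : ℝ) : ℂ) * f s := by
    intro z hz s hs
    have hd : (((1 - q) * s : ℝ) : ℂ) ≠ 0 :=
      Complex.ofReal_ne_zero.mpr (mul_pos hq1' hs.1).ne'
    have h := hz s hs
    rw [qDerivC] at h
    have h2 : (z s - z (q * s)) / (((1 - q) * s : ℝ) : ℂ)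
        = f s - ((lam * v s : ℝ) : ℂ) * z s := by linear_combination h
    have h3 := (div_eq_iff hd).mp h2
    push_cast at h3 ⊢
    linear_combination -h3
  refine ⟨hmain, hu0, hcont, ?_⟩
  intro w hwc hwode hw0 t ht
  rcases eq_or_lt_of_le ht.1 with h0 | h0
  · rw [← h0, hw0, hu0]
  · have htI : t ∈ Set.Ioc (0:ℝ) T := ⟨h0, ht.2⟩
    have hrecu := hrecz (qHeatSol q lam v c f) hmain
    have hrecw := hrecz w hwode
    have key : ∀ s ∈ Set.Ioc (0:ℝ) T,
        w (q * s) - qHeatSol q lam v c f (q * s)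
          = ((1 + (1 - q) * lam * s * v s : ℝ) : ℂ) * (w s - qHeatSol q lam v c f s) := by
      intro s hs
      rw [hrecw s hs, hrecu s hs]; ring
    have hstep : ∀ n : ℕ, q ^ n * t ∈ Set.Ioc (0:ℝ) T := fun n =>
      ⟨mul_pos (pow_pos hq0 n) h0, (hmem t ht n).2⟩
    have hmono : ∀ n : ℕ, ‖w t - qHeatSol q lam v c f t‖
        ≤ ‖w (q ^ n * t) - qHeatSol q lam v c f (q ^ n * t)‖ := by
      intro n
      induction n with
      | zero => simp
      | succ n ih =>
        have hk := key (q ^ n * t) (hstep n)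
        rw [show q * (q ^ n * t) = q ^ (n + 1) * t from by ring] at hk
        rw [hk, norm_mul]
        have hsI : q ^ n * t ∈ Set.Icc (0:ℝ) T := ⟨(hstep n).1.le, (hstep n).2⟩
        have hv0 : 0 ≤ v (q ^ n * t) := le_trans hα.le (hv _ hsI).1
        have hb0' : 0 ≤ (1 - q) * lam * (q ^ n * t) * v (q ^ n * t) :=
          mul_nonneg (mul_nonneg (mul_nonneg hq1'.le hlam.le)
            (mul_nonneg (pow_nonneg hq0.le n) ht.1)) hv0
        have hA : 1 ≤ ‖((1 + (1 - q) * lam * (q ^ n * t) * v (q ^ n * t) : ℝ) : ℂ)‖ := by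
          rw [Complex.norm_real, Real.norm_eq_abs, abs_of_nonneg (by linarith)]
          linarith
        calc ‖w t - qHeatSol q lam v c f t‖
            ≤ ‖w (q ^ n * t) - qHeatSol q lam v c f (q ^ n * t)‖ := ih
          _ = 1 * ‖w (q ^ n * t) - qHeatSol q lam v c f (q ^ n * t)‖ := (one_mul _).symm
          _ ≤ ‖((1 + (1 - q) * lam * (q ^ n * t) * v (q ^ n * t) : ℝ) : ℂ)‖
              * ‖w (q ^ n * t) - qHeatSol q lam v c f (q ^ n * t)‖ :=
            mul_le_mul_of_nonneg_right hA (norm_nonneg _)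
    have hlim : Filter.Tendsto (fun n : ℕ => q ^ n * t) Filter.atTop
        (nhdsWithin 0 (Set.Icc (0:ℝ) T)) := by
      apply tendsto_nhdsWithin_of_tendsto_nhds_of_eventually_within
      · have h1 := tendsto_pow_atTop_nhds_zero_of_lt_one hq0.le hq1
        have h2 := h1.mul_const t
        simpa using h2
      · exact Filter.Eventually.of_forall fun n => ⟨(hstep n).1.le, (hstep n).2⟩
    have hwu : Filter.Tendsto
        (fun n : ℕ => w (q ^ n * t) - qHeatSol q lam v c f (q ^ n * t))
        Filter.atTop (nhds 0) := by
      have hc2 : ContinuousWithinAt (fun x => w x - qHeatSol q lam v c f x)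
          (Set.Icc 0 T) 0 := hwc.sub hcont
      have h10 := hc2.tendsto.comp hlim
      rw [hw0, hu0, sub_self] at h10
      exact h10
    have hn0 : Filter.Tendsto
        (fun n : ℕ => ‖w (q ^ n * t) - qHeatSol q lam v c f (q ^ n * t)‖)
        Filter.atTop (nhds 0) := by
      simpa using hwu.norm
    have hle : ‖w t - qHeatSol q lam v c f t‖ ≤ 0 := ge_of_tendsto' hn0 hmono
    exact sub_eq_zero.mp (norm_le_zero_iff.mp hle)
end

section
/- Coefficient estimate for the direct problem (estimate (3.14) of the paper, with the spectral parameter explicit): let λ > 0, c ∈ ℂ, f:[0,T]→ℂ bounded, and let u(t) = γ_{υ,λ}(t)·[c + ∫_0^t Γ_{υ,λ}(qs) f(s) d_q s]. Then for every t ∈ [0,T], |u(t)| ≤ (1/E_q^{αλt}) |c| + ∫_0^t (E_q^{βλqs}/E_q^{αλt}) |f(s)| d_q s. -/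
open scoped BigOperators InnerProductSpace

lemma qpow_le_qpow {q : ℝ} (hq0 : 0 < q) (hq1 : q < 1) {m n : ℕ} (h : m ≤ n) :
    q ^ n ≤ q ^ m := pow_le_pow_of_le_one hq0.le hq1.le h

lemma one_le_qFactFactor {q : ℝ} (hq0 : 0 < q) (hq1 : q < 1) (j : ℕ) :
    1 ≤ (1 - q ^ (j + 1)) / (1 - q) := by
  rw [le_div_iff₀ (by linarith)]
  have : q ^ (j + 1) ≤ q ^ 1 := qpow_le_qpow hq0 hq1 (by omega)
  simpa using by linarith [this]

lemma one_le_qFact {q : ℝ} (hq0 : 0 < q) (hq1 : q < 1) (k : ℕ) : 1 ≤ qFact q k := by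
  induction k with
  | zero => simp [qFact]
  | succ n ih =>
    rw [qFact, Finset.prod_range_succ, ← qFact]
    nlinarith [one_le_qFactFactor hq0 hq1 n]

lemma qFact_pos {q : ℝ} (hq0 : 0 < q) (hq1 : q < 1) (k : ℕ) : 0 < qFact q k :=
  lt_of_lt_of_le one_pos (one_le_qFact hq0 hq1 k)

lemma tri_succ (k : ℕ) : (k + 1) * ((k + 1) - 1) / 2 = k * (k - 1) / 2 + k := by
  have h : (k + 1) * k = k * (k - 1) + 2 * k := by
    cases k with
    | zero => rfl
    | succ n => simp [Nat.succ_sub_one]; ring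
  simp only [Nat.add_sub_cancel, h, Nat.add_mul_div_left _ _ (by norm_num : 0 < 2)]

/-- The k-th term of the q-exponential series. -/
noncomputable def qExpTerm (q x : ℝ) (k : ℕ) : ℝ := q ^ (k * (k - 1) / 2) * x ^ k / qFact q k

lemma qExp_eq_tsum (q x : ℝ) : qExp q x = ∑' k, qExpTerm q x k := rfl

lemma qExpTerm_nonneg {q : ℝ} (hq0 : 0 < q) (hq1 : q < 1) {x : ℝ} (hx : 0 ≤ x) (k : ℕ) :
    0 ≤ qExpTerm q x k :=
  div_nonneg (by positivity) (qFact_pos hq0 hq1 k).le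

lemma qExpTerm_zero (q x : ℝ) : qExpTerm q x 0 = 1 := by simp [qExpTerm, qFact]

lemma qExpTerm_succ {q : ℝ} (hq0 : 0 < q) (hq1 : q < 1) (x : ℝ) (k : ℕ) :
    qExpTerm q x (k + 1) = (q ^ k * x * ((1 - q) / (1 - q ^ (k + 1)))) * qExpTerm q x k := by
  have hF : qFact q k ≠ 0 := (qFact_pos hq0 hq1 k).ne'
  have hk1 : q ^ (k + 1) < 1 := by
    calc q ^ (k+1) ≤ q ^ 1 := qpow_le_qpow hq0 hq1 (by omega)
    _ < 1 := by simpa using hq1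
  have hne : (1 : ℝ) - q ^ (k + 1) ≠ 0 := by linarith
  have hq : (1 : ℝ) - q ≠ 0 := by linarith
  rw [qExpTerm, qExpTerm, tri_succ, qFact, Finset.prod_range_succ, ← qFact, pow_add, pow_succ]
  field_simp

lemma summable_qExpTerm {q : ℝ} (hq0 : 0 < q) (hq1 : q < 1) {x : ℝ} (hx : 0 ≤ x) :
    Summable (qExpTerm q x) := by
  obtain ⟨N, hN⟩ : ∃ N : ℕ, q ^ N < 1 / (x + 1) :=
    exists_pow_lt_of_lt_one (by positivity) hq1
  have hr1 : q ^ N * x < 1 := by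
    have hx1 : (0:ℝ) < x + 1 := by linarith
    have : q ^ N * (x + 1) < 1 := by
      rw [← lt_div_iff₀ hx1]; exact hN
    nlinarith [pow_pos hq0 N]
  apply summable_of_ratio_norm_eventually_le hr1
  filter_upwards [Filter.eventually_ge_atTop N] with k hk
  rw [qExpTerm_succ hq0 hq1 x k, Real.norm_eq_abs, Real.norm_eq_abs, abs_mul]
  have h2 : (1 - q) / (1 - q ^ (k + 1)) ≤ 1 := by
    have hk1 : q ^ (k + 1) ≤ q ^ 1 := qpow_le_qpow hq0 hq1 (by omega)
    rw [div_le_one (by simp at hk1 ⊢; nlinarith)]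
    simp at hk1; linarith
  have h3 : 0 ≤ (1 - q) / (1 - q ^ (k + 1)) := by
    have hk1 : q ^ (k + 1) ≤ q ^ 1 := qpow_le_qpow hq0 hq1 (by omega)
    simp at hk1
    apply div_nonneg <;> linarith
  have h4 : |q ^ k * x * ((1 - q) / (1 - q ^ (k + 1)))| ≤ q ^ N * x := by
    rw [abs_of_nonneg (by positivity)]
    calc q ^ k * x * ((1 - q) / (1 - q ^ (k + 1))) ≤ q ^ k * x * 1 := by
          apply mul_le_mul_of_nonneg_left h2 (by positivity)
    _ = q ^ k * x := by ring
    _ ≤ q ^ N * x := mul_le_mul_of_nonneg_right (qpow_le_qpow hq0 hq1 hk) hx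
  exact mul_le_mul_of_nonneg_right h4 (abs_nonneg _)

lemma one_le_qExp {q : ℝ} (hq0 : 0 < q) (hq1 : q < 1) {x : ℝ} (hx : 0 ≤ x) :
    1 ≤ qExp q x := by
  rw [qExp_eq_tsum]
  have := Summable.le_tsum (summable_qExpTerm hq0 hq1 hx) 0
    (fun j _ => qExpTerm_nonneg hq0 hq1 hx j)
  rwa [qExpTerm_zero] at this

lemma qExp_funceq {q : ℝ} (hq0 : 0 < q) (hq1 : q < 1) {x : ℝ} (hx : 0 ≤ x) :
    qExp q x = (1 + (1 - q) * x) * qExp q (q * x) := by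
  have hqx : 0 ≤ q * x := by positivity
  have S1 : Summable (qExpTerm q x) := summable_qExpTerm hq0 hq1 hx
  have S2 : Summable (qExpTerm q (q * x)) := summable_qExpTerm hq0 hq1 hqx
  have S2' : Summable (fun k => qExpTerm q (q * x) (k + 1)) :=
    (summable_nat_add_iff 1).2 S2
  have key : ∀ k : ℕ, qExpTerm q x (k + 1)
      = qExpTerm q (q * x) (k + 1) + (1 - q) * x * qExpTerm q (q * x) k := by
    intro k
    have hF : qFact q k ≠ 0 := (qFact_pos hq0 hq1 k).ne'
    have hk1 : q ^ (k + 1) < 1 := by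
      calc q ^ (k+1) ≤ q ^ 1 := qpow_le_qpow hq0 hq1 (by omega)
      _ < 1 := by simpa using hq1
    have hne : (1 : ℝ) - q ^ (k + 1) ≠ 0 := by linarith
    have hqne : (1 : ℝ) - q ≠ 0 := by linarith
    have h1 : qExpTerm q x (k + 1)
        = (x * ((1 - q) / (1 - q ^ (k + 1)))) * qExpTerm q (q * x) k := by
      rw [qExpTerm, qExpTerm, tri_succ, qFact, Finset.prod_range_succ, ← qFact,
        pow_add, mul_pow]
      field_simp
      ring
    rw [h1, qExpTerm_succ hq0 hq1 (q * x) k]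
    field_simp
    ring
  have hsplit : ∑' k, qExpTerm q (q * x) k
      = 1 + ∑' k, qExpTerm q (q * x) (k + 1) := by
    rw [Summable.tsum_eq_zero_add S2, qExpTerm_zero]
  have hmain : ∑' k, qExpTerm q x (k + 1)
      = ∑' k, qExpTerm q (q * x) (k + 1) + (1 - q) * x * ∑' k, qExpTerm q (q * x) k := by
    rw [← tsum_mul_left, ← Summable.tsum_add S2' (S2.mul_left _)]
    exact tsum_congr key
  rw [qExp_eq_tsum, qExp_eq_tsum, Summable.tsum_eq_zero_add S1, qExpTerm_zero, hmain, hsplit]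
  ring

lemma qExp_iter {q : ℝ} (hq0 : 0 < q) (hq1 : q < 1) {x : ℝ} (hx : 0 ≤ x) (n : ℕ) :
    qExp q x = (∏ i ∈ Finset.range n, (1 + (1 - q) * q ^ i * x)) * qExp q (q ^ n * x) := by
  induction n with
  | zero => simp
  | succ n ih =>
    rw [ih, Finset.prod_range_succ,
      qExp_funceq hq0 hq1 (x := q ^ n * x) (by positivity)]
    rw [show q * (q ^ n * x) = q ^ (n + 1) * x by ring]
    ring

lemma qExp_tail_le {q : ℝ} (hq0 : 0 < q) (hq1 : q < 1) {x : ℝ} (hx : 0 ≤ x) (n : ℕ) :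
    qExp q (q ^ n * x) ≤ 1 + q ^ n * (∑' k, qExpTerm q x (k + 1)) := by
  have hqnx : (0:ℝ) ≤ q ^ n * x := by positivity
  have S1 : Summable (qExpTerm q x) := summable_qExpTerm hq0 hq1 hx
  have S1' : Summable (fun k => qExpTerm q x (k + 1)) := (summable_nat_add_iff 1).2 S1
  have S2 : Summable (qExpTerm q (q ^ n * x)) := summable_qExpTerm hq0 hq1 hqnx
  have S2' : Summable (fun k => qExpTerm q (q ^ n * x) (k + 1)) := (summable_nat_add_iff 1).2 S2
  rw [qExp_eq_tsum, Summable.tsum_eq_zero_add S2, qExpTerm_zero, ← tsum_mul_left]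
  apply add_le_add_right
  apply Summable.tsum_le_tsum _ S2' (S1'.mul_left _)
  intro k
  · have : qExpTerm q (q ^ n * x) (k + 1) = q ^ (n * (k + 1)) * qExpTerm q x (k + 1) := by
      rw [qExpTerm, qExpTerm, mul_pow, ← pow_mul]
      ring
    rw [this]
    apply mul_le_mul_of_nonneg_right _ (qExpTerm_nonneg hq0 hq1 hx (k + 1))
    exact qpow_le_qpow hq0 hq1 (Nat.le_mul_of_pos_right n (by omega))

lemma qExp_tail_tendsto {q : ℝ} (hq0 : 0 < q) (hq1 : q < 1) {x : ℝ} (hx : 0 ≤ x) :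
    Filter.Tendsto (fun n => qExp q (q ^ n * x)) Filter.atTop (nhds 1) := by
  have hq : Filter.Tendsto (fun n : ℕ => q ^ n) Filter.atTop (nhds 0) :=
    tendsto_pow_atTop_nhds_zero_of_lt_one hq0.le hq1
  have hup : Filter.Tendsto (fun n : ℕ => 1 + q ^ n * (∑' k, qExpTerm q x (k + 1)))
      Filter.atTop (nhds 1) := by
    have := (hq.mul_const (∑' k, qExpTerm q x (k + 1))).const_add 1
    simpa using this
  refine tendsto_of_tendsto_of_tendsto_of_le_of_le tendsto_const_nhds hup ?_ ?_
  · intro n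
    exact one_le_qExp hq0 hq1 (by positivity)
  · intro n
    exact qExp_tail_le hq0 hq1 hx n

/-- infinite products of `1 + c i` with `c` nonneg summable -/
lemma hasProd_one_add {c : ℕ → ℝ} (hc : ∀ i, 0 ≤ c i) (hs : Summable c) :
    HasProd (fun i => 1 + c i) (Real.exp (∑' i, Real.log (1 + c i))) := by
  have hpos : ∀ i, 0 < 1 + c i := fun i => by linarith [hc i]
  have hlog : Summable (fun i => Real.log (1 + c i)) := by
    apply hs.of_nonneg_of_le (fun i => Real.log_nonneg (by linarith [hc i]))
    intro i
    have := Real.log_le_sub_one_of_pos (hpos i)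
    linarith
  have := hlog.hasSum.rexp
  have heq : (Real.exp ∘ fun i => Real.log (1 + c i)) = fun i => 1 + c i := by
    funext i; exact Real.exp_log (hpos i)
  rwa [heq] at this

lemma tprod_one_add_eq {c : ℕ → ℝ} (hc : ∀ i, 0 ≤ c i) (hs : Summable c) :
    ∏' i, (1 + c i) = Real.exp (∑' i, Real.log (1 + c i)) :=
  (hasProd_one_add hc hs).tprod_eq

lemma one_le_tprod_one_add {c : ℕ → ℝ} (hc : ∀ i, 0 ≤ c i) (hs : Summable c) :
    1 ≤ ∏' i, (1 + c i) := by
  rw [tprod_one_add_eq hc hs]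
  exact Real.one_le_exp (tsum_nonneg fun i => Real.log_nonneg (by linarith [hc i]))

lemma tprod_one_add_le_tprod_one_add {c d : ℕ → ℝ} (hc : ∀ i, 0 ≤ c i) (hs : Summable c)
    (hd : ∀ i, 0 ≤ d i) (hsd : Summable d) (hcd : ∀ i, c i ≤ d i) :
    ∏' i, (1 + c i) ≤ ∏' i, (1 + d i) := by
  rw [tprod_one_add_eq hc hs, tprod_one_add_eq hd hsd]
  apply Real.exp_le_exp.2
  have hlog : ∀ (e : ℕ → ℝ), (∀ i, 0 ≤ e i) → Summable e →
      Summable (fun i => Real.log (1 + e i)) := by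
    intro e he hse
    apply hse.of_nonneg_of_le (fun i => Real.log_nonneg (by linarith [he i]))
    intro i
    have := Real.log_le_sub_one_of_pos (show (0:ℝ) < 1 + e i by linarith [he i])
    linarith
  apply Summable.tsum_le_tsum _ (hlog c hc hs) (hlog d hd hsd)
  intro i
  apply Real.log_le_log (by linarith [hc i]) (by linarith [hcd i])

/-- Euler's identity: q-exponential series equals the infinite product. -/
lemma qExp_eq_tprod {q : ℝ} (hq0 : 0 < q) (hq1 : q < 1) {x : ℝ} (hx : 0 ≤ x) :
    qExp q x = ∏' i, (1 + (1 - q) * q ^ i * x) := by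
  set c : ℕ → ℝ := fun i => (1 - q) * q ^ i * x with hc
  have hcn : ∀ i, 0 ≤ c i := fun i =>
    mul_nonneg (mul_nonneg (by linarith) (by positivity)) hx
  have hcs : Summable c := by
    apply Summable.congr (((summable_geometric_of_lt_one hq0.le hq1).mul_left ((1 - q) * x)))
    intro i; simp only [hc]; ring
  have hP := hasProd_one_add hcn hcs
  have h1 : Filter.Tendsto (fun n => ∏ i ∈ Finset.range n, (1 + c i)) Filter.atTop
      (nhds (∏' i, (1 + c i))) := by
    rw [tprod_one_add_eq hcn hcs]
    exact hP.tendsto_prod_nat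
  have h2 := qExp_tail_tendsto hq0 hq1 hx
  have h3 : Filter.Tendsto
      (fun n => (∏ i ∈ Finset.range n, (1 + c i)) * qExp q (q ^ n * x)) Filter.atTop
      (nhds (∏' i, (1 + c i))) := by
    simpa using h1.mul h2
  have h4 : (fun n => (∏ i ∈ Finset.range n, (1 + c i)) * qExp q (q ^ n * x))
      = fun _ => qExp q x := by
    funext n
    exact (qExp_iter hq0 hq1 hx n).symm
  rw [h4] at h3
  exact tendsto_nhds_unique tendsto_const_nhds h3


lemma summable_qgeom {q : ℝ} (hq0 : 0 < q) (hq1 : q < 1) (y : ℝ) :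
    Summable (fun i : ℕ => (1 - q) * q ^ i * y) :=
  (((summable_geometric_of_lt_one hq0.le hq1).mul_left ((1 - q) * y)).congr
    (fun i => by ring))

lemma qExp_mono {q : ℝ} (hq0 : 0 < q) (hq1 : q < 1) {y y' : ℝ} (hy : 0 ≤ y) (h : y ≤ y') :
    qExp q y ≤ qExp q y' := by
  rw [qExp_eq_tprod hq0 hq1 hy, qExp_eq_tprod hq0 hq1 (hy.trans h)]
  have hy' : 0 ≤ y' := hy.trans h
  refine tprod_one_add_le_tprod_one_add
    (fun i => mul_nonneg (mul_nonneg (by linarith) (by positivity)) hy)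
    (summable_qgeom hq0 hq1 y)
    (fun i => mul_nonneg (mul_nonneg (by linarith) (by positivity)) hy')
    (summable_qgeom hq0 hq1 y') (fun i => ?_)
  have h2 : (0:ℝ) ≤ (1 - q) * q ^ i := mul_nonneg (by linarith) (by positivity)
  nlinarith

lemma qGamma_bounds {q T α β lam : ℝ} {v : ℝ → ℝ} (hq0 : 0 < q) (hq1 : q < 1)
    (hα : 0 < α) (hv : ∀ t ∈ Set.Icc (0 : ℝ) T, α ≤ v t ∧ v t ≤ β) (hlam : 0 < lam)
    {s : ℝ} (hs0 : 0 ≤ s) (hsT : s ≤ T) :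
    qExp q (α * lam * s) ≤ qGamma q lam v s ∧ qGamma q lam v s ≤ qExp q (β * lam * s) := by
  have hsI : s ∈ Set.Icc (0:ℝ) T := ⟨hs0, hsT⟩
  have hβ : α ≤ β := le_trans (hv s hsI).1 (hv s hsI).2
  have hβ0 : 0 < β := lt_of_lt_of_le hα hβ
  have h1q : (0:ℝ) ≤ 1 - q := by linarith
  set cG : ℕ → ℝ := fun i => (1 - q) * lam * q ^ i * s * v (q ^ i * s) with hcG
  have hpt : ∀ i : ℕ, q ^ i * s ∈ Set.Icc (0:ℝ) T := by
    intro i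
    constructor
    · positivity
    · have h1 : q ^ i ≤ 1 := pow_le_one₀ hq0.le hq1.le
      nlinarith
  have hGlb : ∀ i, (1 - q) * q ^ i * (α * lam * s) ≤ cG i := by
    intro i
    have h1 := (hv _ (hpt i)).1
    have h2 : (0:ℝ) ≤ (1 - q) * lam * q ^ i * s := by
      apply mul_nonneg _ hs0
      apply mul_nonneg (mul_nonneg h1q hlam.le) (by positivity)
    simp only [hcG]
    nlinarith
  have hGub : ∀ i, cG i ≤ (1 - q) * q ^ i * (β * lam * s) := by
    intro i
    have h1 := (hv _ (hpt i)).2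
    have h2 : (0:ℝ) ≤ (1 - q) * lam * q ^ i * s := by
      apply mul_nonneg _ hs0
      apply mul_nonneg (mul_nonneg h1q hlam.le) (by positivity)
    simp only [hcG]
    nlinarith
  have hGn : ∀ i, 0 ≤ cG i := by
    intro i
    refine le_trans ?_ (hGlb i)
    apply mul_nonneg (mul_nonneg h1q (by positivity))
    have := hα.le; have := hlam.le
    positivity
  have hGs : Summable cG := by
    apply (summable_qgeom hq0 hq1 (β * lam * s)).of_nonneg_of_le hGn hGub
  have hGamma_eq : qGamma q lam v s = ∏' i, (1 + cG i) := rfl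
  constructor
  · rw [qExp_eq_tprod hq0 hq1
      (by apply mul_nonneg (mul_nonneg hα.le hlam.le) hs0 : (0:ℝ) ≤ α * lam * s), hGamma_eq]
    exact tprod_one_add_le_tprod_one_add
      (fun i => mul_nonneg (mul_nonneg h1q (by positivity))
        (mul_nonneg (mul_nonneg hα.le hlam.le) hs0))
      (summable_qgeom hq0 hq1 _) hGn hGs hGlb
  · rw [qExp_eq_tprod hq0 hq1
      (by apply mul_nonneg (mul_nonneg hβ0.le hlam.le) hs0 : (0:ℝ) ≤ β * lam * s), hGamma_eq]
    exact tprod_one_add_le_tprod_one_add hGn hGs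
      (fun i => mul_nonneg (mul_nonneg h1q (by positivity))
        (mul_nonneg (mul_nonneg hβ0.le hlam.le) hs0))
      (summable_qgeom hq0 hq1 _) hGub


/-- Coefficient estimate for the direct problem (estimate (3.14) of the paper): for
`u(t) = γ_{υ,λ}(t)·[c + ∫_0^t Γ_{υ,λ}(qs) f(s) d_q s]` one has, for every `t ∈ [0,T]`,
`|u(t)| ≤ (1/E_q^{αλt}) |c| + ∫_0^t (E_q^{βλqs}/E_q^{αλt}) |f(s)| d_q s`. -/
theorem coefficient_estimate_direct
    (q T α β lam : ℝ) (v : ℝ → ℝ) (c : ℂ) (f : ℝ → ℂ)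
    (hq0 : 0 < q) (hq1 : q < 1)
    (hvcont : ContinuousOn v (Set.Icc 0 T))
    (hα : 0 < α)
    (hv : ∀ t ∈ Set.Icc (0 : ℝ) T, α ≤ v t ∧ v t ≤ β)
    (hlam : 0 < lam)
    (hfb : ∃ M, ∀ t ∈ Set.Icc (0 : ℝ) T, ‖f t‖ ≤ M) :
    ∀ t ∈ Set.Icc (0 : ℝ) T,
      ‖qHeatSol q lam v c f t‖
        ≤ (1 / qExp q (α * lam * t)) * ‖c‖
          + jacksonIntegral q t
              (fun s => qExp q (β * lam * (q * s)) / qExp q (α * lam * t) * ‖f s‖) := by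
  intro t ht
  obtain ⟨ht0, htT⟩ := ht
  obtain ⟨M, hM⟩ := hfb
  have hM0 : 0 ≤ M := le_trans (norm_nonneg _) (hM t ⟨ht0, htT⟩)
  have h1q : (0:ℝ) < 1 - q := by linarith
  have hβ : 0 < β := lt_of_lt_of_le hα
    (le_trans (hv t ⟨ht0, htT⟩).1 (hv t ⟨ht0, htT⟩).2)
  have hEt1 : 1 ≤ qExp q (α * lam * t) := one_le_qExp hq0 hq1 (by positivity)
  have hEt0 : (0:ℝ) < qExp q (α * lam * t) := lt_of_lt_of_le one_pos hEt1
  have hGb := qGamma_bounds hq0 hq1 hα hv hlam ht0 htT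
  have hEG : qExp q (α * lam * t) ≤ qGamma q lam v t := hGb.1
  have hGt0 : (0:ℝ) < qGamma q lam v t := lt_of_lt_of_le hEt0 hEG
  have hpow1 : ∀ m : ℕ, q ^ m ≤ 1 := fun m => pow_le_one₀ hq0.le hq1.le
  have hsm0 : ∀ m : ℕ, (0:ℝ) ≤ q * (q ^ m * t) := fun m => by positivity
  have hsmT : ∀ m : ℕ, q * (q ^ m * t) ≤ T := by
    intro m
    have h1 := hpow1 m
    have h2 : q * q ^ m ≤ 1 := by nlinarith [pow_nonneg hq0.le m]
    nlinarith [mul_le_mul_of_nonneg_right h2 ht0]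
  have hsmT' : ∀ m : ℕ, q ^ m * t ≤ T := by
    intro m
    have h1 := hpow1 m
    nlinarith
  have hGm := fun m : ℕ => qGamma_bounds hq0 hq1 hα hv hlam (hsm0 m) (hsmT m)
  set G' : ℕ → ℝ := fun m => qGamma q lam v (q * (q ^ m * t)) with hG'
  set E' : ℕ → ℝ := fun m => qExp q (β * lam * (q * (q ^ m * t))) with hE'
  set Et := qExp q (α * lam * t) with hEtdef
  set Gt := qGamma q lam v t with hGtdef
  set Estar := qExp q (β * lam * (q * t)) with hEstar
  have hG'E : ∀ m, G' m ≤ E' m := fun m => (hGm m).2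
  have hG'1 : ∀ m, 1 ≤ G' m := fun m =>
    le_trans (one_le_qExp hq0 hq1 (by positivity)) (hGm m).1
  have hG'0 : ∀ m, (0:ℝ) ≤ G' m := fun m => le_trans zero_le_one (hG'1 m)
  have hE'star : ∀ m, E' m ≤ Estar := by
    intro m
    apply qExp_mono hq0 hq1 (by positivity)
    have h1 := hpow1 m
    have h2 : q ^ m * t ≤ t := by nlinarith
    nlinarith [mul_le_mul_of_nonneg_left h2 (show (0:ℝ) ≤ β * lam * q by positivity)]
  have hE'0 : ∀ m, (0:ℝ) ≤ E' m := fun m =>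
    le_trans zero_le_one (one_le_qExp hq0 hq1 (by positivity))
  have hEstar0 : (0:ℝ) ≤ Estar := le_trans (hE'0 0) (hE'star 0)
  have hF0 : ∀ m : ℕ, (0:ℝ) ≤ ‖f (q ^ m * t)‖ := fun m => norm_nonneg _
  have hFM : ∀ m : ℕ, ‖f (q ^ m * t)‖ ≤ M := fun m => hM _ ⟨by positivity, hsmT' m⟩
  set F : ℕ → ℝ := fun m => ‖f (q ^ m * t)‖ with hF
  set a : ℕ → ℂ := fun m =>
    (q : ℂ) ^ m * (((G' m : ℝ) : ℂ) * f (q ^ m * t)) with ha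
  have hna : ∀ m, ‖a m‖ = q ^ m * (G' m * F m) := by
    intro m
    simp only [ha, hF, norm_mul, norm_pow, Complex.norm_real, Real.norm_eq_abs,
      abs_of_pos hq0]
    rw [abs_of_nonneg (hG'0 m)]
  have hgeo : Summable (fun m : ℕ => q ^ m * (Estar * M)) :=
    (summable_geometric_of_lt_one hq0.le hq1).mul_right _
  have hbound : ∀ m, q ^ m * (G' m * F m) ≤ q ^ m * (Estar * M) := by
    intro m
    have h0 : (0:ℝ) ≤ q ^ m := by positivity
    have h1 : G' m * F m ≤ Estar * M := by
      calc G' m * F m ≤ Estar * F m :=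
            mul_le_mul_of_nonneg_right ((hG'E m).trans (hE'star m)) (hF0 m)
      _ ≤ Estar * M := mul_le_mul_of_nonneg_left (hFM m) hEstar0
    exact mul_le_mul_of_nonneg_left h1 h0
  have hnaS : Summable (fun m => ‖a m‖) := by
    apply hgeo.of_nonneg_of_le (fun m => norm_nonneg _)
    intro m
    rw [hna m]
    exact hbound m
  set b : ℕ → ℝ := fun m => q ^ m * (E' m / Et * F m) with hb
  have hb0 : ∀ m, 0 ≤ b m := fun m => by
    apply mul_nonneg (by positivity)
    exact mul_nonneg (div_nonneg (hE'0 m) hEt0.le) (hF0 m)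
  have hbS : Summable b := by
    apply hgeo.of_nonneg_of_le hb0
    intro m
    apply mul_le_mul_of_nonneg_left _ (by positivity : (0:ℝ) ≤ q ^ m)
    have h1 : E' m / Et ≤ E' m := div_le_self (hE'0 m) hEt1
    calc E' m / Et * F m ≤ E' m * F m := mul_le_mul_of_nonneg_right h1 (hF0 m)
    _ ≤ Estar * F m := mul_le_mul_of_nonneg_right (hE'star m) (hF0 m)
    _ ≤ Estar * M := mul_le_mul_of_nonneg_left (hFM m) hEstar0
  have hterm : ∀ m, Gt⁻¹ * ‖a m‖ ≤ b m := by
    intro m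
    have hkey : Gt⁻¹ * G' m ≤ E' m / Et := by
      calc Gt⁻¹ * G' m ≤ Et⁻¹ * E' m :=
            mul_le_mul (inv_anti₀ hEt0 hEG) (hG'E m) (hG'0 m) (inv_nonneg.2 hEt0.le)
      _ = E' m / Et := by rw [div_eq_mul_inv]; ring
    calc Gt⁻¹ * ‖a m‖ = (q ^ m * F m) * (Gt⁻¹ * G' m) := by rw [hna m]; ring
    _ ≤ (q ^ m * F m) * (E' m / Et) := by
        apply mul_le_mul_of_nonneg_left hkey (mul_nonneg (by positivity) (hF0 m))
    _ = b m := by rw [hb]; ring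
  have hInt : jacksonIntegral q t
      (fun s => qExp q (β * lam * (q * s)) / Et * ‖f s‖) = (1 - q) * t * ∑' m, b m := rfl
  have hstep1 : qHeatSol q lam v c f t
      = ((Gt⁻¹ : ℝ) : ℂ) * (c + ((((1 - q) * t : ℝ)) : ℂ) * ∑' m, a m) := rfl
  calc ‖qHeatSol q lam v c f t‖
      = Gt⁻¹ * ‖c + ((((1 - q) * t : ℝ)) : ℂ) * ∑' m, a m‖ := by
        rw [hstep1, norm_mul, Complex.norm_real, Real.norm_eq_abs,
          abs_of_pos (inv_pos.2 hGt0)]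
  _ ≤ Gt⁻¹ * (‖c‖ + (1 - q) * t * ∑' m, ‖a m‖) := by
        apply mul_le_mul_of_nonneg_left _ (inv_nonneg.2 hGt0.le)
        refine le_trans (norm_add_le _ _) ?_
        apply add_le_add_right
        rw [norm_mul, Complex.norm_real, Real.norm_eq_abs,
          abs_of_nonneg (by positivity : (0:ℝ) ≤ (1 - q) * t)]
        exact mul_le_mul_of_nonneg_left (norm_tsum_le_tsum_norm hnaS) (by positivity)
  _ = Gt⁻¹ * ‖c‖ + (1 - q) * t * ∑' m, (Gt⁻¹ * ‖a m‖) := by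
        rw [tsum_mul_left]
        ring
  _ ≤ (1 / Et) * ‖c‖ + (1 - q) * t * ∑' m, b m := by
        apply add_le_add
        · apply mul_le_mul_of_nonneg_right _ (norm_nonneg c)
          rw [one_div]
          exact inv_anti₀ hEt0 hEG
        · apply mul_le_mul_of_nonneg_left _ (by positivity : (0:ℝ) ≤ (1 - q) * t)
          exact Summable.tsum_le_tsum hterm (hnaS.mul_left _) hbS
  _ = (1 / Et) * ‖c‖ + jacksonIntegral q t
        (fun s => qExp q (β * lam * (q * s)) / Et * ‖f s‖) := by rw [hInt]
end

section
/- Symmetry of the q-Bessel operator: let α > −1 and let f, g belong to C²_{q,0}(ℝ_q^+), i.e. f, g: ℝ_q^+ → ℝ with sup_{x∈ℝ_q^+}|D_q^k f(x)| < ∞ (k = 0,1,2) and with x^{2α+1}D_q f(x) g(x) → 0 and D_q f(x)·x^{2α+1}D_q g(x) → 0 as x → 0 and as x → ∞ along ℝ_q^+ (and likewise with f, g interchanged). Then ⟨Δ_{q,α} f, g⟩ = ⟨f, Δ_{q,α} g⟩, where ⟨f,g⟩ = ∫_0^∞ f(x) g(x) x^{2α+1} d_q x. -/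
open scoped BigOperators InnerProductSpace

/-- The q-lattice `ℝ_q^+ = {q^z : z ∈ ℤ}`. -/
def qLattice (q : ℝ) : Set ℝ := {x : ℝ | ∃ z : ℤ, x = q ^ z}

/-- The inner product `⟨f,g⟩ = ∫_0^∞ f(x) g(x) x^{2α+1} d_q x` on `L_{α,2,q}`, with the
bilateral Jackson integral `∫_0^∞ h(x) d_q x = (1−q) Σ_{z∈ℤ} q^z h(q^z)`. -/
noncomputable def qBesselInner (q a : ℝ) (f g : ℝ → ℝ) : ℝ :=
  (1 - q) * ∑' z : ℤ, (q : ℝ) ^ z * (f (q ^ z) * g (q ^ z) * ((q : ℝ) ^ z) ^ (2 * a + 1))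

/-- The q-Bessel operator `Δ_{q,α} f(x) = x^{−(2α+1)} D_q[t ↦ t^{2α+1} D_q f(t)](q^{−1}x)`. -/
noncomputable def qBesselOp (q a : ℝ) (f : ℝ → ℝ) (x : ℝ) : ℝ :=
  x ^ (-(2 * a + 1)) * qDeriv q (fun t => t ^ (2 * a + 1) * qDeriv q f t) (q⁻¹ * x)


section qBesselAux

open Filter

private lemma qb_tele (W : ℤ → ℝ) (c : ℤ) : ∀ M : ℕ,
    ∑ z ∈ Finset.Icc c (c + M), (W (z-1) - W z) = W (c-1) - W (c + M) := by
  intro M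
  induction M with
  | zero => simp
  | succ n ih =>
      have h : c + ((n:ℤ)+1) = (c + n) + 1 := by ring
      push_cast
      rw [h, show Finset.Icc c (c + n + 1) = insert (c + n + 1) (Finset.Icc c (c + n)) by
        ext x; simp; omega]
      rw [Finset.sum_insert (by simp), ih]
      ring_nf

private lemma qb_teleIcc (W : ℤ → ℝ) (N : ℕ) :
    ∑ z ∈ Finset.Icc (-(N:ℤ)) N, (W (z-1) - W z) = W (-(N:ℤ)-1) - W N := by
  have := qb_tele W (-(N:ℤ)) (2*N)
  rw [show (-(N:ℤ) + (2*N : ℕ)) = (N:ℤ) by push_cast; ring] at this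
  exact this

private lemma qb_tsum_tele (W : ℤ → ℝ) (h1 : Tendsto W atTop (nhds 0))
    (h2 : Tendsto W atBot (nhds 0))
    (hs : Summable (fun z => W (z-1) - W z)) :
    ∑' z : ℤ, (W (z-1) - W z) = 0 := by
  have hIcc : Tendsto (fun N : ℕ => Finset.Icc (-(N:ℤ)) N) atTop atTop := by
    apply tendsto_atTop_finset_of_monotone
    · intro m n hmn
      apply Finset.Icc_subset_Icc <;> omega
    · intro x
      exact ⟨x.natAbs, by rw [Finset.mem_Icc]; omega⟩
  have hA : Tendsto (fun N : ℕ => ∑ z ∈ Finset.Icc (-(N:ℤ)) N, (W (z-1) - W z))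
      atTop (nhds (∑' z : ℤ, (W (z-1) - W z))) :=
    (hs.hasSum.comp hIcc)
  have hB : Tendsto (fun N : ℕ => W (-(N:ℤ)-1) - W N) atTop (nhds 0) := by
    have hc : Tendsto (fun N : ℕ => -(N:ℤ)-1) atTop atBot := by
      apply tendsto_atBot_add_const_right
      exact (tendsto_neg_atBot_iff).mpr tendsto_natCast_atTop_atTop
    have := (h2.comp hc).sub (h1.comp tendsto_natCast_atTop_atTop)
    simpa using this
  exact tendsto_nhds_unique (hA.congr (fun N => qb_teleIcc W N)) hB

private lemma qb_term_eq (q a : ℝ) (f g : ℝ → ℝ) (hq0 : 0 < q) (hq1 : q < 1) (z : ℤ) :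
    (q:ℝ)^z * (qBesselOp q a f ((q:ℝ)^z) * g ((q:ℝ)^z) * (((q:ℝ)^z)) ^ (2*a+1))
    - (q:ℝ)^z * (f ((q:ℝ)^z) * qBesselOp q a g ((q:ℝ)^z) * (((q:ℝ)^z)) ^ (2*a+1))
    = (q/(1-q)) *
      (((((q:ℝ)^(z-1))) ^ (2*a+1) * qDeriv q f ((q:ℝ)^(z-1)) * g ((q:ℝ)^(z-1))
        - (((q:ℝ)^(z-1))) ^ (2*a+1) * qDeriv q g ((q:ℝ)^(z-1)) * f ((q:ℝ)^(z-1)))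
      - ((((q:ℝ)^z)) ^ (2*a+1) * qDeriv q f ((q:ℝ)^z) * g ((q:ℝ)^z)
        - (((q:ℝ)^z)) ^ (2*a+1) * qDeriv q g ((q:ℝ)^z) * f ((q:ℝ)^z))) := by
  have hqne : q ≠ 0 := hq0.ne'
  have h1q : (1:ℝ) - q ≠ 0 := by linarith
  have hSpos : (0:ℝ) < (q:ℝ)^(z-1) := zpow_pos hq0 _
  have hRpos : (0:ℝ) < (q:ℝ)^z := zpow_pos hq0 _
  have e1 : q⁻¹ * (q:ℝ)^z = (q:ℝ)^(z-1) := by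
    rw [zpow_sub_one₀ hqne]; ring
  have e2 : q * (q:ℝ)^(z-1) = (q:ℝ)^z := by
    rw [zpow_sub_one₀ hqne]; field_simp
  have df : qDeriv q f ((q:ℝ)^(z-1))
      = (f ((q:ℝ)^(z-1)) - f ((q:ℝ)^z)) / ((1-q) * (q:ℝ)^(z-1)) := by
    rw [qDeriv, e2]
  have dg : qDeriv q g ((q:ℝ)^(z-1))
      = (g ((q:ℝ)^(z-1)) - g ((q:ℝ)^z)) / ((1-q) * (q:ℝ)^(z-1)) := by
    rw [qDeriv, e2]
  have eQ : (((q:ℝ)^z)) ^ (-(2*a+1)) = ((((q:ℝ)^z)) ^ (2*a+1))⁻¹ :=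
    Real.rpow_neg hRpos.le _
  simp only [qBesselOp, qDeriv, e1, e2, eQ, df, dg]
  have hQ : (0:ℝ) < (((q:ℝ)^z)) ^ (2*a+1) := Real.rpow_pos_of_pos hRpos _
  set P := (((q:ℝ)^(z-1))) ^ (2*a+1) with hP
  set Q := (((q:ℝ)^z)) ^ (2*a+1) with hQdef
  set S := (q:ℝ)^(z-1) with hS
  set R := (q:ℝ)^z with hR
  have hRS : R = q * S := e2.symm
  rw [hRS]
  field_simp
  ring

end qBesselAux

/-- Symmetry of the q-Bessel operator: for `α > −1` and `f, g ∈ C²_{q,0}(ℝ_q^+)` (with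
bounded q-derivatives up to order two and vanishing boundary terms at `0` and `∞` along
`ℝ_q^+`), one has `⟨Δ_{q,α} f, g⟩ = ⟨f, Δ_{q,α} g⟩`. -/
theorem qBessel_symmetric
    (q a : ℝ) (f g : ℝ → ℝ)
    (hq0 : 0 < q) (hq1 : q < 1) (ha : -1 < a)
    -- boundedness of f, g and their q-derivatives up to order 2 on ℝ_q^+
    (hfb : ∃ M, ∀ x ∈ qLattice q, |f x| ≤ M ∧ |qDeriv q f x| ≤ M ∧ |qDeriv q (qDeriv q f) x| ≤ M)
    (hgb : ∃ M, ∀ x ∈ qLattice q, |g x| ≤ M ∧ |qDeriv q g x| ≤ M ∧ |qDeriv q (qDeriv q g) x| ≤ M)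
    -- boundary terms x^{2α+1} D_q f(x) g(x) vanish as x → 0 (z → ∞) and x → ∞ (z → −∞)
    (hbfg0 : Filter.Tendsto (fun z : ℤ => ((q : ℝ) ^ z) ^ (2 * a + 1) * qDeriv q f (q ^ z) * g (q ^ z))
      Filter.atTop (nhds 0))
    (hbfginf : Filter.Tendsto (fun z : ℤ => ((q : ℝ) ^ z) ^ (2 * a + 1) * qDeriv q f (q ^ z) * g (q ^ z))
      Filter.atBot (nhds 0))
    (hbgf0 : Filter.Tendsto (fun z : ℤ => ((q : ℝ) ^ z) ^ (2 * a + 1) * qDeriv q g (q ^ z) * f (q ^ z))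
      Filter.atTop (nhds 0))
    (hbgfinf : Filter.Tendsto (fun z : ℤ => ((q : ℝ) ^ z) ^ (2 * a + 1) * qDeriv q g (q ^ z) * f (q ^ z))
      Filter.atBot (nhds 0))
    -- boundary terms D_q f(x) · x^{2α+1} D_q g(x) vanish as x → 0 and x → ∞
    (hbdd0 : Filter.Tendsto (fun z : ℤ => qDeriv q f (q ^ z) * (((q : ℝ) ^ z) ^ (2 * a + 1) * qDeriv q g (q ^ z)))
      Filter.atTop (nhds 0))
    (hbddinf : Filter.Tendsto (fun z : ℤ => qDeriv q f (q ^ z) * (((q : ℝ) ^ z) ^ (2 * a + 1) * qDeriv q g (q ^ z)))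
      Filter.atBot (nhds 0))
    -- absolute convergence of the q-integrals involved
    (hs1 : Summable (fun z : ℤ =>
      |(q : ℝ) ^ z * (qBesselOp q a f (q ^ z) * g (q ^ z) * ((q : ℝ) ^ z) ^ (2 * a + 1))|))
    (hs2 : Summable (fun z : ℤ =>
      |(q : ℝ) ^ z * (f (q ^ z) * qBesselOp q a g (q ^ z) * ((q : ℝ) ^ z) ^ (2 * a + 1))|))
    (hs3 : Summable (fun z : ℤ =>
      |(q : ℝ) ^ z * (qDeriv q f (q ^ z) * qDeriv q g (q ^ z) * ((q : ℝ) ^ z) ^ (2 * a + 1))|)) :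
    qBesselInner q a (qBesselOp q a f) g = qBesselInner q a f (qBesselOp q a g) := by
  classical
  have hqne : q ≠ 0 := hq0.ne'
  have h1q : (0:ℝ) < 1 - q := by linarith
  have hc : q / (1 - q) ≠ 0 := div_ne_zero hqne h1q.ne'
  set W : ℤ → ℝ := fun z =>
    ((q:ℝ)^z) ^ (2*a+1) * qDeriv q f ((q:ℝ)^z) * g ((q:ℝ)^z)
    - ((q:ℝ)^z) ^ (2*a+1) * qDeriv q g ((q:ℝ)^z) * f ((q:ℝ)^z) with hW
  set t1 : ℤ → ℝ := fun z =>
    (q:ℝ)^z * (qBesselOp q a f ((q:ℝ)^z) * g ((q:ℝ)^z) * ((q:ℝ)^z) ^ (2*a+1)) with ht1def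
  set t2 : ℤ → ℝ := fun z =>
    (q:ℝ)^z * (f ((q:ℝ)^z) * qBesselOp q a g ((q:ℝ)^z) * ((q:ℝ)^z) ^ (2*a+1)) with ht2def
  have ht1 : Summable t1 := summable_abs_iff.mp hs1
  have ht2 : Summable t2 := summable_abs_iff.mp hs2
  have key : ∀ z : ℤ, t1 z - t2 z = (q/(1-q)) * (W (z-1) - W z) := fun z =>
    qb_term_eq q a f g hq0 hq1 z
  have hWtop : Filter.Tendsto W Filter.atTop (nhds 0) := by
    simpa using hbfg0.sub hbgf0
  have hWbot : Filter.Tendsto W Filter.atBot (nhds 0) := by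
    simpa using hbfginf.sub hbgfinf
  have hsd : Summable (fun z : ℤ => (q/(1-q)) * (W (z-1) - W z)) :=
    (ht1.sub ht2).congr key
  have hsW : Summable (fun z : ℤ => W (z-1) - W z) := by
    have := hsd.mul_left (q/(1-q))⁻¹
    simp only [← mul_assoc, inv_mul_cancel₀ hc, one_mul] at this
    exact this
  have hzero : ∑' z : ℤ, (t1 z - t2 z) = 0 := by
    rw [tsum_congr key, tsum_mul_left, qb_tsum_tele W hWtop hWbot hsW, mul_zero]
  have hts : ∑' z : ℤ, t1 z = ∑' z : ℤ, t2 z := by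
    have := Summable.tsum_sub ht1 ht2
    rw [hzero] at this
    linarith [this]
  show (1 - q) * ∑' z : ℤ, t1 z = (1 - q) * ∑' z : ℤ, t2 z
  rw [hts]
end
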